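/- arXiv:1512.06796 — 4 statements merged into one kernel-verified Lean document; each statement's English description precedes it below -/
import Mathlib

section
/- A univariate polynomial p with real coefficients is nonnegative on all of ℝ if and only if p can be written as a sum of squares of real polynomials (in fact, of two squares). -/
open Polynomial

private lemma sum_two_squares_aux :
    ∀ n (p : ℝ[X]), p.natDegree = n → (∀ x : ℝ, 0 ≤ p.eval x) →
      ∃ q₁ q₂ : ℝ[X], p = q₁ ^ 2 + q₂ ^ 2 := by
  intro n
  induction n using Nat.strong_induction_on with
  | _ n ih =>
    intro p hdeg hpos
    by_cases hp0 : p = 0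
    · exact ⟨0, 0, by simp [hp0]⟩
    by_cases hd : p.natDegree = 0
    · obtain ⟨c, rfl⟩ := natDegree_eq_zero.mp hd
      have hc : 0 ≤ c := by simpa using hpos 0
      refine ⟨C (Real.sqrt c), 0, ?_⟩
      rw [← C_pow, sq, Real.mul_self_sqrt hc]
      simp
    -- natDegree ≥ 1
    by_cases hroot : ∃ a : ℝ, p.eval a = 0
    · obtain ⟨a, ha⟩ := hroot
      -- a is a global min, so derivative vanishes
      have hmin : IsLocalMin (fun x => p.eval x) a := by
        apply Filter.Eventually.of_forall
        intro x
        simpa [ha] using hpos x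
      have hderiv : p.derivative.eval a = 0 := by
        rw [← Polynomial.deriv]
        exact hmin.deriv_eq_zero
      -- (X - C a)^2 ∣ p
      obtain ⟨g, hg⟩ := (dvd_iff_isRoot.mpr ha)
      have hga : g.eval a = 0 := by
        have hdg : p.derivative = g + (X - C a) * g.derivative := by
          rw [hg, derivative_mul]
          simp [mul_comm]
        have := hderiv
        rw [hdg] at this
        simpa using this
      obtain ⟨r, hr⟩ := (dvd_iff_isRoot.mpr hga)
      have hpr : p = (X - C a) ^ 2 * r := by rw [hg, hr]; ring
      have hr0 : r ≠ 0 := by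
        rintro rfl
        simp [hpr] at hp0
      -- r is nonneg
      have hrpos : ∀ x : ℝ, 0 ≤ r.eval x := by
        have hne : ∀ x : ℝ, x ≠ a → 0 ≤ r.eval x := by
          intro x hx
          have hxa : x - a ≠ 0 := sub_ne_zero.mpr hx
          have h1 : 0 < (x - a) ^ 2 := by positivity
          have h2 : 0 ≤ (x - a) ^ 2 * r.eval x := by
            have := hpos x
            rw [hpr] at this
            simpa using this
          nlinarith
        intro x
        rcases eq_or_ne x a with rfl | hx
        · -- continuity argument
          have htend : Filter.Tendsto (fun k : ℕ => x + 1 / (k + 1)) Filter.atTop (nhds x) := by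
            simpa using (tendsto_const_nhds (x := x)).add
              tendsto_one_div_add_atTop_nhds_zero_nat
          have htend2 : Filter.Tendsto (fun k : ℕ => r.eval (x + 1 / (k + 1)))
              Filter.atTop (nhds (r.eval x)) :=
            (r.continuous.tendsto x).comp htend
          refine ge_of_tendsto' htend2 fun k => ?_
          refine hne _ (ne_of_gt ?_)
          have : (0:ℝ) < 1 / ((k:ℝ) + 1) := by positivity
          linarith
        · exact hne x hx
      -- degree bookkeeping
      have hdr : p.natDegree = 2 + r.natDegree := by
        rw [hpr, natDegree_mul (pow_ne_zero 2 (X_sub_C_ne_zero a)) hr0]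
        simp [natDegree_pow]
      obtain ⟨q₁, q₂, hq⟩ := ih r.natDegree (by omega) r rfl hrpos
      exact ⟨(X - C a) * q₁, (X - C a) * q₂, by rw [hpr, hq]; ring⟩
    · -- no real root: find complex root
      push_neg at hroot
      set P : ℂ[X] := p.map (algebraMap ℝ ℂ) with hP
      have hPdeg : 0 < P.degree := by
        rw [hP, degree_map]
        exact natDegree_pos_iff_degree_pos.mp (Nat.pos_of_ne_zero hd)
      obtain ⟨z, hz⟩ := Complex.exists_root hPdeg
      have hevalR : ∀ x : ℝ, P.eval (x : ℂ) = ((p.eval x : ℝ) : ℂ) := by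
        intro x
        rw [hP, eval_map]
        have : ((x:ℝ) : ℂ) = algebraMap ℝ ℂ x := rfl
        rw [this]
        exact eval₂_at_apply (p := p) (algebraMap ℝ ℂ) x
      have him : z.im ≠ 0 := by
        intro h0
        have hzre : z = (z.re : ℂ) := by
          exact (Complex.re_add_im z) ▸ by rw [h0]; simp
        have := hz
        rw [IsRoot, hzre, hevalR] at this
        exact hroot z.re (by exact_mod_cast this)
      -- conjugate root
      have hzconj : P.eval (starRingEnd ℂ z) = 0 := by
        have : (starRingEnd ℂ) (P.eval z) = P.eval (starRingEnd ℂ z) := by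
          rw [hP, eval_map, eval_map, hom_eval₂]
          congr 1
          ext x
          simp [Complex.conj_ofReal]
        rw [← this, hz, map_zero]
      -- real quadratic divisor
      set d : ℝ[X] := (X - C z.re) ^ 2 + C (z.im ^ 2) with hdq
      have h2d : ((X - C z.re) ^ 2).degree = 2 := by
        rw [degree_pow, degree_X_sub_C]; rfl
      have hClt : (C (z.im ^ 2)).degree < ((X - C z.re) ^ 2).degree := by
        rw [h2d]
        exact lt_of_le_of_lt degree_C_le (by norm_num)
      have hdmonic : d.Monic :=
        Monic.add_of_left ((monic_X_sub_C z.re).pow 2) hClt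
      have hdmap : d.map (algebraMap ℝ ℂ) = (X - C z) * (X - C (starRingEnd ℂ z)) := by
        have hmapd : d.map (algebraMap ℝ ℂ)
            = (X - C ((z.re : ℂ))) ^ 2 + C ((z.im : ℂ)) ^ 2 := by
          rw [hdq]
          simp only [Polynomial.map_add, Polynomial.map_pow, Polynomial.map_sub,
            Polynomial.map_mul, map_X, map_C, ← C_pow]
          norm_num
        have hz1 : C z = C ((z.re : ℂ)) + C ((z.im : ℂ)) * C Complex.I := by
          rw [← C_mul, ← C_add, Complex.re_add_im]
        have hz2 : C ((starRingEnd ℂ) z) = C ((z.re : ℂ)) - C ((z.im : ℂ)) * C Complex.I := by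
          rw [← C_mul, ← C_sub]
          congr 1
          rw [Complex.ext_iff]
          simp
        have hI : (C Complex.I : ℂ[X]) ^ 2 = -1 := by
          rw [← C_pow, Complex.I_sq]
          simp
        rw [hmapd, hz1, hz2]
        linear_combination (C ((z.im : ℂ)) : ℂ[X]) ^ 2 * hI
      have hdvdC : d.map (algebraMap ℝ ℂ) ∣ P := by
        rw [hdmap]
        obtain ⟨g, hg⟩ := dvd_iff_isRoot.mpr hz
        have hgconj : g.eval (starRingEnd ℂ z) = 0 := by
          have := hzconj
          rw [hg, eval_mul, eval_sub, eval_X, eval_C] at this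
          have hne : (starRingEnd ℂ) z - z ≠ 0 := by
            intro h
            apply him
            have : (starRingEnd ℂ) z = z := by linear_combination h
            have := Complex.conj_eq_iff_im.mp this
            exact this
          exact (mul_eq_zero.mp this).resolve_left hne
        obtain ⟨s, hs⟩ := dvd_iff_isRoot.mpr hgconj
        exact ⟨s, by rw [hg, hs]; ring⟩
      have hdvd : d ∣ p := (map_dvd_map' (algebraMap ℝ ℂ)).mp hdvdC
      obtain ⟨r, hr⟩ := hdvd
      have hdeval : ∀ x : ℝ, 0 < d.eval x := by
        intro x
        rw [hdq]
        simp only [eval_add, eval_pow, eval_sub, eval_X, eval_C]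
        have := sq_nonneg (x - z.re)
        have := him
        positivity
      have hr0 : r ≠ 0 := by rintro rfl; simp [hr] at hp0
      have hrpos : ∀ x : ℝ, 0 ≤ r.eval x := by
        intro x
        have h1 := hpos x
        rw [hr, eval_mul] at h1
        exact nonneg_of_mul_nonneg_right h1 (hdeval x)
      have hddeg : d.natDegree = 2 := by
        have hdeg2 : d.degree = 2 := by
          rw [hdq, degree_add_eq_left_of_degree_lt hClt, h2d]
        exact natDegree_eq_of_degree_eq_some hdeg2
      have hdr : p.natDegree = 2 + r.natDegree := by
        rw [hr, natDegree_mul (hdmonic.ne_zero) hr0, hddeg]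
      obtain ⟨q₁, q₂, hq⟩ := ih r.natDegree (by omega) r rfl hrpos
      refine ⟨(X - C z.re) * q₁ - C z.im * q₂, (X - C z.re) * q₂ + C z.im * q₁, ?_⟩
      rw [hr, hq, hdq]
      have : C (z.im ^ 2) = (C z.im) ^ 2 := by rw [C_pow]
      rw [this]
      ring

theorem nonneg_iff_sum_two_squares (p : ℝ[X]) :
    (∀ x : ℝ, 0 ≤ p.eval x) ↔ ∃ q₁ q₂ : ℝ[X], p = q₁ ^ 2 + q₂ ^ 2 := by
  constructor
  · exact fun h => sum_two_squares_aux p.natDegree p rfl h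
  · rintro ⟨q₁, q₂, rfl⟩ x
    simp only [eval_add, eval_pow]
    positivity
end

section
/- A real polynomial p of odd degree at most 2k−1 is nonnegative on the interval [−1,1] if and only if there exist sums of squares q and r of polynomials of degree at most k−1 such that p(t) = (1+t)·q(t) + (1−t)·r(t). -/
open Polynomial

/-- `q` is a sum of squares of polynomials of degree at most `d`. -/
def IsSOSOfDegLE (d : ℕ) (q : ℝ[X]) : Prop :=
  ∃ (m : ℕ) (s : Fin m → ℝ[X]), (∀ i, (s i).natDegree ≤ d) ∧ q = ∑ i, (s i) ^ 2

namespace LukacsAux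

/-- SOS with strict degree bound on the summands. -/
def SOSLt (m : ℕ) (q : ℝ[X]) : Prop :=
  ∃ (n : ℕ) (s : Fin n → ℝ[X]), (∀ i, (s i).natDegree < m) ∧ q = ∑ i, (s i) ^ 2

lemma SOSLt.zero (m : ℕ) : SOSLt m 0 := ⟨0, ![], by simp, by simp⟩

lemma SOSLt.mono {m m' : ℕ} {q : ℝ[X]} (h : SOSLt m q) (hm : m ≤ m') : SOSLt m' q := by
  obtain ⟨n, s, hs, rfl⟩ := h
  exact ⟨n, s, fun i => lt_of_lt_of_le (hs i) hm, rfl⟩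

lemma SOSLt.add {m : ℕ} {q r : ℝ[X]} (hq : SOSLt m q) (hr : SOSLt m r) : SOSLt m (q + r) := by
  obtain ⟨n₁, s₁, hs₁, rfl⟩ := hq
  obtain ⟨n₂, s₂, hs₂, rfl⟩ := hr
  refine ⟨n₁ + n₂, Fin.append s₁ s₂, ?_, ?_⟩
  · intro i
    refine Fin.addCases (fun j => ?_) (fun j => ?_) i
    · simpa [Fin.append_left] using hs₁ j
    · simpa [Fin.append_right] using hs₂ j
  · rw [Fin.sum_univ_add]
    simp [Fin.append_left, Fin.append_right]

lemma SOSLt.mul {m : ℕ} {q : ℝ[X]} (h : SOSLt m q) (c : ℝ) (hc : 0 ≤ c) (g : ℝ[X])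
    (e : ℕ) (hg : g.natDegree ≤ e) : SOSLt (m + e) (C c * g ^ 2 * q) := by
  obtain ⟨n, s, hs, rfl⟩ := h
  refine ⟨n, fun i => C (Real.sqrt c) * g * s i, ?_, ?_⟩
  · intro i
    calc (C (Real.sqrt c) * g * s i).natDegree
        ≤ (C (Real.sqrt c) * g).natDegree + (s i).natDegree := natDegree_mul_le
      _ ≤ ((C (Real.sqrt c)).natDegree + g.natDegree) + (s i).natDegree := by
          exact add_le_add_left natDegree_mul_le _
      _ < m + e := by
          have := hs i
          simp only [natDegree_C, zero_add]
          omega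
  · rw [Finset.mul_sum]
    refine Finset.sum_congr rfl fun i _ => ?_
    have : (C (Real.sqrt c)) ^ 2 = C c := by
      rw [← C_pow, Real.sq_sqrt hc]
    ring_nf
    rw [← this]
    ring


/-- Even form of level m: degree ≤ 2m. -/
def EvenF (m : ℕ) (p : ℝ[X]) : Prop :=
  ∃ q r : ℝ[X], SOSLt (m + 1) q ∧ SOSLt m r ∧ p = q + (1 - X ^ 2) * r

/-- Odd form of level m: degree ≤ 2m - 1. -/
def OddF (m : ℕ) (p : ℝ[X]) : Prop :=
  ∃ q r : ℝ[X], SOSLt m q ∧ SOSLt m r ∧ p = (1 + X) * q + (1 - X) * r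

lemma peq {p q : ℝ[X]} (h : ∀ x : ℝ, p.eval x = q.eval x) : p = q := Polynomial.funext h

lemma EvenF.mono {m m' : ℕ} {p : ℝ[X]} (h : EvenF m p) (hm : m ≤ m') : EvenF m' p := by
  obtain ⟨q, r, hq, hr, rfl⟩ := h
  exact ⟨q, r, hq.mono (by omega), hr.mono hm, rfl⟩

lemma OddF.mono {m m' : ℕ} {p : ℝ[X]} (h : OddF m p) (hm : m ≤ m') : OddF m' p := by
  obtain ⟨q, r, hq, hr, rfl⟩ := h
  exact ⟨q, r, hq.mono hm, hr.mono hm, rfl⟩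

lemma EvenF.toOdd {m : ℕ} {p : ℝ[X]} (h : EvenF m p) : OddF (m + 1) p := by
  obtain ⟨q, r, hq, hr, rfl⟩ := h
  refine ⟨C (1/2 : ℝ) * 1 ^ 2 * q + C (1/2 : ℝ) * (1 - X) ^ 2 * r,
          C (1/2 : ℝ) * 1 ^ 2 * q + C (1/2 : ℝ) * (1 + X) ^ 2 * r, ?_, ?_, ?_⟩
  · exact (hq.mul (1/2) (by norm_num) 1 0 (by simp)).add
      ((hr.mul (1/2) (by norm_num) (1 - X) 1 (by
        simpa using natDegree_sub_le (1 : ℝ[X]) X)).mono (le_refl _))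
  · exact (hq.mul (1/2) (by norm_num) 1 0 (by simp)).add
      ((hr.mul (1/2) (by norm_num) (1 + X) 1 (by
        simpa using natDegree_add_le (1 : ℝ[X]) X)).mono (le_refl _))
  · refine peq fun x => ?_
    simp [eval_mul, eval_add, eval_sub, eval_pow]
    ring

lemma OddF.toEven {m : ℕ} {p : ℝ[X]} (h : OddF m p) : EvenF m p := by
  obtain ⟨q, r, hq, hr, rfl⟩ := h
  refine ⟨C (1/2 : ℝ) * (1 + X) ^ 2 * q + C (1/2 : ℝ) * (1 - X) ^ 2 * r,
          C (1/2 : ℝ) * 1 ^ 2 * q + C (1/2 : ℝ) * 1 ^ 2 * r, ?_, ?_, ?_⟩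
  · exact (hq.mul (1/2) (by norm_num) (1 + X) 1 (by
        simpa using natDegree_add_le (1 : ℝ[X]) X)).add
      (hr.mul (1/2) (by norm_num) (1 - X) 1 (by
        simpa using natDegree_sub_le (1 : ℝ[X]) X))
  · exact ((hq.mul (1/2) (by norm_num) 1 0 (by simp)).add
      (hr.mul (1/2) (by norm_num) 1 0 (by simp))).mono (by omega)
  · refine peq fun x => ?_
    simp [eval_mul, eval_add, eval_sub, eval_pow]
    ring

/-- Multiplying by a PSD quadratic `g^2 + h^2` with `g, h` of degree ≤ 1. -/
lemma EvenF.mulQuad {m : ℕ} {u : ℝ[X]} (h : EvenF m u) {g hh : ℝ[X]}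
    (hg : g.natDegree ≤ 1) (hhh : hh.natDegree ≤ 1) :
    EvenF (m + 1) ((g ^ 2 + hh ^ 2) * u) := by
  obtain ⟨q, r, hq, hr, rfl⟩ := h
  refine ⟨C (1:ℝ) * g ^ 2 * q + C (1:ℝ) * hh ^ 2 * q,
          C (1:ℝ) * g ^ 2 * r + C (1:ℝ) * hh ^ 2 * r, ?_, ?_, ?_⟩
  · exact (hq.mul 1 zero_le_one g 1 hg).add (hq.mul 1 zero_le_one hh 1 hhh)
  · exact (hr.mul 1 zero_le_one g 1 hg).add (hr.mul 1 zero_le_one hh 1 hhh)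
  · refine peq fun x => ?_
    simp [eval_mul, eval_add, eval_sub, eval_pow]
    ring

lemma OddF.mulQuad {m : ℕ} {u : ℝ[X]} (h : OddF m u) {g hh : ℝ[X]}
    (hg : g.natDegree ≤ 1) (hhh : hh.natDegree ≤ 1) :
    OddF (m + 1) ((g ^ 2 + hh ^ 2) * u) := by
  obtain ⟨q, r, hq, hr, rfl⟩ := h
  refine ⟨C (1:ℝ) * g ^ 2 * q + C (1:ℝ) * hh ^ 2 * q,
          C (1:ℝ) * g ^ 2 * r + C (1:ℝ) * hh ^ 2 * r, ?_, ?_, ?_⟩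
  · exact (hq.mul 1 zero_le_one g 1 hg).add (hq.mul 1 zero_le_one hh 1 hhh)
  · exact (hr.mul 1 zero_le_one g 1 hg).add (hr.mul 1 zero_le_one hh 1 hhh)
  · refine peq fun x => ?_
    simp [eval_mul, eval_add, eval_sub, eval_pow]
    ring


lemma deg1p : (1 + X : ℝ[X]).natDegree ≤ 1 := by simpa using natDegree_add_le (1 : ℝ[X]) X
lemma deg1m : (1 - X : ℝ[X]).natDegree ≤ 1 := by simpa using natDegree_sub_le (1 : ℝ[X]) X
lemma deg1' : (1 : ℝ[X]).natDegree ≤ 0 := by simp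

/-- Multiplying an even form by `a - X` with `a ≥ 1`. -/
lemma EvenF.mulRight {m : ℕ} {u : ℝ[X]} (h : EvenF m u) {a : ℝ} (ha : 1 ≤ a) :
    OddF (m + 1) ((C a - X) * u) := by
  obtain ⟨q, r, hq, hr, rfl⟩ := h
  have h1 : (0:ℝ) ≤ (a - 1) / 2 := by linarith
  have h2 : (0:ℝ) ≤ (a + 1) / 2 := by linarith
  refine ⟨C ((a-1)/2) * 1 ^ 2 * q + C ((a+1)/2) * (1 - X) ^ 2 * r,
          C ((a+1)/2) * 1 ^ 2 * q + C ((a-1)/2) * (1 + X) ^ 2 * r, ?_, ?_, ?_⟩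
  · exact ((hq.mul _ h1 1 0 deg1').mono (by omega)).add (hr.mul _ h2 (1 - X) 1 deg1m)
  · exact ((hq.mul _ h2 1 0 deg1').mono (by omega)).add (hr.mul _ h1 (1 + X) 1 deg1p)
  · refine peq fun x => ?_
    simp [eval_mul, eval_add, eval_sub, eval_pow]
    ring

/-- Multiplying an odd form by `a - X` with `a ≥ 1`. -/
lemma OddF.mulRight {m : ℕ} {u : ℝ[X]} (h : OddF m u) {a : ℝ} (ha : 1 ≤ a) :
    EvenF m ((C a - X) * u) := by
  obtain ⟨q, r, hq, hr, rfl⟩ := h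
  have h1 : (0:ℝ) ≤ (a - 1) / 2 := by linarith
  have h2 : (0:ℝ) ≤ (a + 1) / 2 := by linarith
  refine ⟨C ((a-1)/2) * (1 + X) ^ 2 * q + C ((a+1)/2) * (1 - X) ^ 2 * r,
          C ((a+1)/2) * 1 ^ 2 * q + C ((a-1)/2) * 1 ^ 2 * r, ?_, ?_, ?_⟩
  · exact (hq.mul _ h1 (1 + X) 1 deg1p).add (hr.mul _ h2 (1 - X) 1 deg1m)
  · exact ((hq.mul _ h2 1 0 deg1').add (hr.mul _ h1 1 0 deg1')).mono (by omega)
  · refine peq fun x => ?_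
    simp [eval_mul, eval_add, eval_sub, eval_pow]
    ring

/-- Multiplying an even form by `X - a` with `a ≤ -1`. -/
lemma EvenF.mulLeft {m : ℕ} {u : ℝ[X]} (h : EvenF m u) {a : ℝ} (ha : a ≤ -1) :
    OddF (m + 1) ((X - C a) * u) := by
  obtain ⟨q, r, hq, hr, rfl⟩ := h
  have h1 : (0:ℝ) ≤ (1 - a) / 2 := by linarith
  have h2 : (0:ℝ) ≤ (-1 - a) / 2 := by linarith
  refine ⟨C ((1-a)/2) * 1 ^ 2 * q + C ((-1-a)/2) * (1 - X) ^ 2 * r,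
          C ((-1-a)/2) * 1 ^ 2 * q + C ((1-a)/2) * (1 + X) ^ 2 * r, ?_, ?_, ?_⟩
  · exact ((hq.mul _ h1 1 0 deg1').mono (by omega)).add (hr.mul _ h2 (1 - X) 1 deg1m)
  · exact ((hq.mul _ h2 1 0 deg1').mono (by omega)).add (hr.mul _ h1 (1 + X) 1 deg1p)
  · refine peq fun x => ?_
    simp [eval_mul, eval_add, eval_sub, eval_pow]
    ring

/-- Multiplying an odd form by `X - a` with `a ≤ -1`. -/
lemma OddF.mulLeft {m : ℕ} {u : ℝ[X]} (h : OddF m u) {a : ℝ} (ha : a ≤ -1) :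
    EvenF m ((X - C a) * u) := by
  obtain ⟨q, r, hq, hr, rfl⟩ := h
  have h1 : (0:ℝ) ≤ (1 - a) / 2 := by linarith
  have h2 : (0:ℝ) ≤ (-1 - a) / 2 := by linarith
  refine ⟨C ((1-a)/2) * (1 + X) ^ 2 * q + C ((-1-a)/2) * (1 - X) ^ 2 * r,
          C ((-1-a)/2) * 1 ^ 2 * q + C ((1-a)/2) * 1 ^ 2 * r, ?_, ?_, ?_⟩
  · exact (hq.mul _ h1 (1 + X) 1 deg1p).add (hr.mul _ h2 (1 - X) 1 deg1m)
  · exact ((hq.mul _ h2 1 0 deg1').add (hr.mul _ h1 1 0 deg1')).mono (by omega)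
  · refine peq fun x => ?_
    simp [eval_mul, eval_add, eval_sub, eval_pow]
    ring

/-- Base case: nonnegative constants. -/
lemma EvenF.const {c : ℝ} (hc : 0 ≤ c) : EvenF 0 (C c) := by
  refine ⟨C (Real.sqrt c) ^ 2, 0, ⟨1, fun _ => C (Real.sqrt c), by simp, by simp⟩,
    SOSLt.zero 0, ?_⟩
  rw [← C_pow, Real.sq_sqrt hc]
  ring


lemma nn_right (v : ℝ[X]) {a b : ℝ} (hab : a < b)
    (h : ∀ t, a < t → t ≤ b → 0 ≤ v.eval t) : 0 ≤ v.eval a := by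
  have hc : Filter.Tendsto (fun x => v.eval x) (nhdsWithin a (Set.Ioi a)) (nhds (v.eval a)) :=
    (v.continuous.continuousAt).continuousWithinAt
  refine ge_of_tendsto hc ?_
  filter_upwards [Ioc_mem_nhdsGT hab] with t ht using h t ht.1 ht.2

lemma nn_left (v : ℝ[X]) {a b : ℝ} (hab : b < a)
    (h : ∀ t, b ≤ t → t < a → 0 ≤ v.eval t) : 0 ≤ v.eval a := by
  have hc : Filter.Tendsto (fun x => v.eval x) (nhdsWithin a (Set.Iio a)) (nhds (v.eval a)) :=
    (v.continuous.continuousAt).continuousWithinAt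
  refine ge_of_tendsto hc ?_
  filter_upwards [Ico_mem_nhdsLT hab] with t ht using h t ht.1 ht.2

lemma nn_closure (v : ℝ[X]) (a : ℝ)
    (h : ∀ t ∈ Set.Icc (-1:ℝ) 1, t ≠ a → 0 ≤ v.eval t) :
    ∀ t ∈ Set.Icc (-1:ℝ) 1, 0 ≤ v.eval t := by
  intro t ht
  by_cases hta : t = a
  · subst hta
    rcases lt_or_ge t 1 with h1 | h1
    · exact nn_right v h1 fun s hs1 hs2 =>
        h s ⟨le_trans ht.1 hs1.le, hs2⟩ (ne_of_gt hs1)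
    · have ht1 : t = 1 := le_antisymm ht.2 h1
      have : (-1:ℝ) < t := by rw [ht1]; norm_num
      exact nn_left v this fun s hs1 hs2 => h s ⟨hs1, hs2.le.trans ht.2⟩ (ne_of_lt hs2)
  · exact h t ht hta

lemma quad_dvd (p : ℝ[X]) {z : ℂ} (hz : z.im ≠ 0)
    (hroot : (p.map (algebraMap ℝ ℂ)).IsRoot z) :
    ((X - C z.re) ^ 2 + C (z.im ^ 2)) ∣ p := by
  set g : ℝ[X] := (X - C z.re) ^ 2 + C (z.im ^ 2) with hgdef
  have hdd : ((X - C z.re) ^ 2 : ℝ[X]).degree = 2 := by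
    rw [degree_pow, degree_X_sub_C]; rfl
  have hmon : g.Monic := by
    refine ((monic_X_sub_C _).pow 2).add_of_left ?_
    exact lt_of_le_of_lt degree_C_le (by rw [hdd]; decide)
  have hgd : g.degree = 2 := by
    rw [hgdef, degree_add_eq_left_of_degree_lt, hdd]
    exact lt_of_le_of_lt degree_C_le (by rw [hdd]; decide)
  rw [← modByMonic_eq_zero_iff_dvd hmon]
  set r := p %ₘ g with hrdef
  have hdeg : r.degree ≤ 1 := by
    have := degree_modByMonic_lt p hmon
    rw [hgd] at this
    exact Order.le_of_lt_succ (by exact_mod_cast this)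
  have hrl : r = C (r.coeff 1) * X + C (r.coeff 0) := eq_X_add_C_of_degree_le_one hdeg
  have hsplit : p = g * (p /ₘ g) + r := by
    conv_lhs => rw [← modByMonic_add_div p g]
    rw [← hrdef]; ring
  have hgz : ((g.map (algebraMap ℝ ℂ)).eval z) = 0 := by
    have him : ((z.re : ℂ) = (z.re : ℝ)) := rfl
    simp only [hgdef, Polynomial.map_add, Polynomial.map_pow, Polynomial.map_sub,
      map_X, map_C, eval_add, eval_pow, eval_sub, eval_X, eval_C]
    have : (algebraMap ℝ ℂ) z.re = (z.re : ℂ) := rfl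
    rw [this]
    have : (algebraMap ℝ ℂ) (z.im ^ 2) = ((z.im : ℂ)) ^ 2 := by
      simp [Complex.ofReal_pow]
    rw [this]
    have hzz : z - (z.re : ℂ) = (z.im : ℂ) * Complex.I := by
      apply Complex.ext <;> simp
    rw [hzz]
    have : ((z.im : ℂ) * Complex.I) ^ 2 = -((z.im:ℂ) ^ 2) := by
      rw [mul_pow, Complex.I_sq]; ring
    rw [this]; ring
  have hrz : ((r.map (algebraMap ℝ ℂ)).eval z) = 0 := by
    have := hroot
    rw [Polynomial.IsRoot, hsplit, Polynomial.map_add, Polynomial.map_mul, eval_add,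
      eval_mul, hgz] at this
    simpa using this
  rw [hrl] at hrz
  simp only [Polynomial.map_add, Polynomial.map_mul, map_C, map_X, eval_add, eval_mul,
    eval_C, eval_X] at hrz
  have h1 : r.coeff 1 = 0 := by
    have := congrArg Complex.im hrz
    simp [Complex.add_im, Complex.mul_im] at this
    rcases this with h | h
    · exact h
    · exact absurd h hz
  have h0 : r.coeff 0 = 0 := by
    rw [h1] at hrz
    simpa using hrz
  rw [hrl, h1, h0]
  simp


lemma main : ∀ d : ℕ, ∀ p : ℝ[X], p ≠ 0 → p.natDegree = d →
    (∀ t ∈ Set.Icc (-1:ℝ) 1, 0 ≤ p.eval t) →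
    (d % 2 = 0 → EvenF (d / 2) p) ∧ (d % 2 = 1 → OddF (d / 2 + 1) p) := by
  intro d
  induction d using Nat.strong_induction_on with
  | _ d IH =>
  intro p hp hd hnn
  rcases Nat.eq_zero_or_pos d with hd0 | hdpos
  · subst hd0
    have hc : p = C (p.coeff 0) := Polynomial.eq_C_of_natDegree_eq_zero hd
    refine ⟨fun _ => ?_, fun h => by simp at h⟩
    rw [hc]
    refine EvenF.const ?_
    have := hnn 0 (by norm_num)
    rwa [hc, eval_C] at this
  by_cases hroot : ∃ a : ℝ, p.IsRoot a
  · obtain ⟨a, ha⟩ := hroot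
    obtain ⟨v, hv⟩ : (X - C a) ∣ p := dvd_iff_isRoot.mpr ha
    have hv0 : v ≠ 0 := by rintro rfl; rw [mul_zero] at hv; exact hp hv
    rcases le_or_gt 1 a with hA | hA
    · -- root at a ≥ 1
      set u : ℝ[X] := -v with hudef
      have hu0 : u ≠ 0 := neg_ne_zero.mpr hv0
      have hpu : p = (C a - X) * u := by rw [hv, hudef]; ring
      have hd1 : d = u.natDegree + 1 := by
        have hne : (C a - X : ℝ[X]) ≠ 0 := by
          intro h
          have : ((C a - X : ℝ[X])).natDegree = 1 := by
            rw [show (C a - X : ℝ[X]) = -(X - C a) by ring, natDegree_neg, natDegree_X_sub_C]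
          rw [h] at this; simp at this
        have h1 : ((C a - X : ℝ[X])).natDegree = 1 := by
          rw [show (C a - X : ℝ[X]) = -(X - C a) by ring, natDegree_neg, natDegree_X_sub_C]
        rw [← hd, hpu, natDegree_mul hne hu0, h1]
        omega
      have hnnu : ∀ t ∈ Set.Icc (-1:ℝ) 1, 0 ≤ u.eval t := by
        refine nn_closure u a fun t ht hta => ?_
        have hta' : t < a := lt_of_le_of_ne (le_trans ht.2 hA) hta
        have hp0 := hnn t ht
        rw [hpu, eval_mul, eval_sub, eval_X, eval_C] at hp0
        nlinarith
      obtain ⟨HE, HO⟩ := IH u.natDegree (by omega) u hu0 rfl hnnu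
      constructor
      · intro hpar
        have h := (HO (by omega)).mulRight hA
        rw [← hpu] at h
        have heq : d / 2 = u.natDegree / 2 + 1 := by omega
        rwa [heq]
      · intro hpar
        have h := (HE (by omega)).mulRight hA
        rw [← hpu] at h
        have heq : d / 2 = u.natDegree / 2 := by omega
        rwa [heq]
    rcases le_or_gt a (-1) with hB | hB
    · -- root at a ≤ -1
      have hpu : p = (X - C a) * v := hv
      have hd1 : d = v.natDegree + 1 := by
        rw [← hd, hpu, natDegree_mul (X_sub_C_ne_zero a) hv0, natDegree_X_sub_C]
        omega
      have hnnu : ∀ t ∈ Set.Icc (-1:ℝ) 1, 0 ≤ v.eval t := by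
        refine nn_closure v a fun t ht hta => ?_
        have hta' : a < t := lt_of_le_of_ne (le_trans hB ht.1) (Ne.symm hta)
        have hp0 := hnn t ht
        rw [hpu, eval_mul, eval_sub, eval_X, eval_C] at hp0
        nlinarith
      obtain ⟨HE, HO⟩ := IH v.natDegree (by omega) v hv0 rfl hnnu
      constructor
      · intro hpar
        have h := (HO (by omega)).mulLeft hB
        rw [← hpu] at h
        have heq : d / 2 = v.natDegree / 2 + 1 := by omega
        rwa [heq]
      · intro hpar
        have h := (HE (by omega)).mulLeft hB
        rw [← hpu] at h
        have heq : d / 2 = v.natDegree / 2 := by omega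
        rwa [heq]
    · -- interior root: -1 < a < 1
      have hva1 : 0 ≤ v.eval a := by
        refine nn_right v hA fun t h1 h2 => ?_
        have hp0 := hnn t ⟨by linarith, h2⟩
        rw [hv, eval_mul, eval_sub, eval_X, eval_C] at hp0
        nlinarith
      have hva2 : v.eval a ≤ 0 := by
        have h := nn_left (-v) hB fun t h1 h2 => ?_
        · rw [eval_neg] at h; linarith
        · have hp0 := hnn t ⟨h1, by linarith⟩
          rw [hv, eval_mul, eval_sub, eval_X, eval_C] at hp0
          rw [eval_neg]
          nlinarith
      have hva : v.IsRoot a := le_antisymm hva2 hva1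
      obtain ⟨u, hu⟩ : (X - C a) ∣ v := dvd_iff_isRoot.mpr hva
      have hpu : p = (X - C a) ^ 2 * u := by rw [hv, hu]; ring
      have hu0 : u ≠ 0 := by rintro rfl; rw [mul_zero] at hpu; exact hp hpu
      have hd2 : d = u.natDegree + 2 := by
        have hne : ((X - C a : ℝ[X]) ^ 2) ≠ 0 := pow_ne_zero 2 (X_sub_C_ne_zero a)
        rw [← hd, hpu, natDegree_mul hne hu0, natDegree_pow, natDegree_X_sub_C]
        omega
      have hnnu : ∀ t ∈ Set.Icc (-1:ℝ) 1, 0 ≤ u.eval t := by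
        refine nn_closure u a fun t ht hta => ?_
        have hp0 := hnn t ht
        rw [hpu, eval_mul, eval_pow, eval_sub, eval_X, eval_C] at hp0
        have hne : t - a ≠ 0 := sub_ne_zero.mpr hta
        have hsq : 0 < (t - a) ^ 2 := (sq_nonneg _).lt_of_ne (Ne.symm (pow_ne_zero 2 hne))
        nlinarith
      obtain ⟨HE, HO⟩ := IH u.natDegree (by omega) u hu0 rfl hnnu
      have heq : ((X - C a) ^ 2 + (0:ℝ[X]) ^ 2) * u = p := by rw [hpu]; ring
      constructor
      · intro hpar
        have h := (HE (by omega)).mulQuad (g := X - C a) (hh := 0)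
          (le_of_eq (natDegree_X_sub_C a)) (by simp)
        rw [heq] at h
        have he2 : d / 2 = u.natDegree / 2 + 1 := by omega
        rwa [he2]
      · intro hpar
        have h := (HO (by omega)).mulQuad (g := X - C a) (hh := 0)
          (le_of_eq (natDegree_X_sub_C a)) (by simp)
        rw [heq] at h
        have he2 : d / 2 + 1 = (u.natDegree / 2 + 1) + 1 := by omega
        rwa [he2]
  · -- no real root
    have hdeg0 : 0 < (p.map (algebraMap ℝ ℂ)).degree := by
      rw [degree_map]
      exact natDegree_pos_iff_degree_pos.mp (by omega)
    obtain ⟨z, hz⟩ := Complex.exists_root hdeg0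
    have hzim : z.im ≠ 0 := by
      intro h0
      refine hroot ⟨z.re, ?_⟩
      have hzeq : z = algebraMap ℝ ℂ z.re := by
        apply Complex.ext <;> simp [h0]
      rw [Polynomial.IsRoot, hzeq, eval_map, eval₂_at_apply] at hz
      exact Complex.ofReal_eq_zero.mp hz
    obtain ⟨u, hu⟩ := quad_dvd p hzim hz
    have hu0 : u ≠ 0 := by rintro rfl; rw [mul_zero] at hu; exact hp hu
    have hgn : ((X - C z.re) ^ 2 + C (z.im ^ 2) : ℝ[X]).natDegree = 2 := by
      rw [natDegree_add_C, natDegree_pow, natDegree_X_sub_C]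
    have hgne : ((X - C z.re) ^ 2 + C (z.im ^ 2) : ℝ[X]) ≠ 0 := by
      intro h; rw [h] at hgn; simp at hgn
    have hd2 : d = u.natDegree + 2 := by
      rw [← hd, hu, natDegree_mul hgne hu0, hgn]
      omega
    have hnnu : ∀ t ∈ Set.Icc (-1:ℝ) 1, 0 ≤ u.eval t := by
      intro t ht
      have hp0 := hnn t ht
      rw [hu, eval_mul, eval_add, eval_pow, eval_sub, eval_X, eval_C, eval_C] at hp0
      have hsq : 0 < (t - z.re) ^ 2 + z.im ^ 2 := by
        have h2 : 0 < z.im ^ 2 := (sq_nonneg _).lt_of_ne (Ne.symm (pow_ne_zero 2 hzim))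
        nlinarith [sq_nonneg (t - z.re)]
      nlinarith
    obtain ⟨HE, HO⟩ := IH u.natDegree (by omega) u hu0 rfl hnnu
    have heq : ((X - C z.re) ^ 2 + (C z.im) ^ 2) * u = p := by rw [hu, C_pow]
    constructor
    · intro hpar
      have h := (HE (by omega)).mulQuad (g := X - C z.re) (hh := C z.im)
        (le_of_eq (natDegree_X_sub_C z.re)) (by simp)
      rw [heq] at h
      have he2 : d / 2 = u.natDegree / 2 + 1 := by omega
      rwa [he2]
    · intro hpar
      have h := (HO (by omega)).mulQuad (g := X - C z.re) (hh := C z.im)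
        (le_of_eq (natDegree_X_sub_C z.re)) (by simp)
      rw [heq] at h
      have he2 : d / 2 + 1 = (u.natDegree / 2 + 1) + 1 := by omega
      rwa [he2]

end LukacsAux


theorem lukacs_odd (k : ℕ) (hk : 1 ≤ k) (p : ℝ[X]) (hdeg : p.natDegree ≤ 2 * k - 1) :
    (∀ t ∈ Set.Icc (-1 : ℝ) 1, 0 ≤ p.eval t) ↔
      ∃ q r : ℝ[X], IsSOSOfDegLE (k - 1) q ∧ IsSOSOfDegLE (k - 1) r ∧
        p = (1 + X) * q + (1 - X) * r := by
  constructor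
  · intro hnn
    by_cases hp0 : p = 0
    · exact ⟨0, 0, ⟨0, ![], by simp, by simp⟩, ⟨0, ![], by simp, by simp⟩, by simp [hp0]⟩
    obtain ⟨HE, HO⟩ := LukacsAux.main p.natDegree p hp0 rfl hnn
    have key : LukacsAux.OddF k p := by
      by_cases hpar : p.natDegree % 2 = 0
      · exact ((HE hpar).toOdd).mono (by omega)
      · exact (HO (by omega)).mono (by omega)
    obtain ⟨q, r, ⟨n1, s1, hs1, rfl⟩, ⟨n2, s2, hs2, rfl⟩, hpqr⟩ := key
    exact ⟨_, _, ⟨n1, s1, fun i => by have := hs1 i; omega, rfl⟩,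
           ⟨n2, s2, fun i => by have := hs2 i; omega, rfl⟩, hpqr⟩
  · rintro ⟨q, r, ⟨n1, s1, hs1, rfl⟩, ⟨n2, s2, hs2, rfl⟩, rfl⟩ t ht
    simp only [eval_add, eval_mul, eval_sub, eval_one, eval_X, eval_finset_sum, eval_pow]
    have h1 : (0:ℝ) ≤ ∑ i, (s1 i).eval t ^ 2 := Finset.sum_nonneg fun i _ => sq_nonneg _
    have h2 : (0:ℝ) ≤ ∑ i, (s2 i).eval t ^ 2 := Finset.sum_nonneg fun i _ => sq_nonneg _
    have ht1 : (0:ℝ) ≤ 1 + t := by linarith [ht.1]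
    have ht2 : (0:ℝ) ≤ 1 - t := by linarith [ht.2]
    exact add_nonneg (mul_nonneg ht1 h1) (mul_nonneg ht2 h2)
end

section
/- A real polynomial p of even degree at most 2k is nonnegative on the interval [−1,1] if and only if there exist a sum of squares q of polynomials of degree at most k−1 and a sum of squares s of polynomials of degree at most k such that p(t) = (1−t²)·q(t) + s(t). -/
open Polynomial

/-- Representation in the truncated quadratic module. -/
def QRep (k : ℕ) (p : ℝ[X]) : Prop :=
  ∃ (m n : ℕ) (a : Fin m → ℝ[X]) (b : Fin n → ℝ[X]),
    (∀ i, a i = 0 ∨ (a i).natDegree < k) ∧ (∀ j, (b j).natDegree ≤ k) ∧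
    p = (1 - X ^ 2) * (∑ i, (a i) ^ 2) + ∑ j, (b j) ^ 2

lemma QRep.mono {k k' : ℕ} {p : ℝ[X]} (h : QRep k p) (hk : k ≤ k') : QRep k' p := by
  obtain ⟨m, n, a, b, ha, hb, rfl⟩ := h
  exact ⟨m, n, a, b, fun i => (ha i).imp id (fun h => lt_of_lt_of_le h hk),
    fun j => le_trans (hb j) hk, rfl⟩

lemma QRep.zero (k : ℕ) : QRep k 0 :=
  ⟨0, 0, ![], ![], by simp, by simp, by simp⟩

lemma QRep.add {k : ℕ} {p q : ℝ[X]} (hp : QRep k p) (hq : QRep k q) : QRep k (p + q) := by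
  obtain ⟨m, n, a, b, ha, hb, rfl⟩ := hp
  obtain ⟨m', n', a', b', ha', hb', rfl⟩ := hq
  refine ⟨m + m', n + n', Fin.append a a', Fin.append b b', ?_, ?_, ?_⟩
  · intro i
    induction i using Fin.addCases with
    | left i => rw [Fin.append_left]; exact ha i
    | right i => rw [Fin.append_right]; exact ha' i
  · intro j
    induction j using Fin.addCases with
    | left j => rw [Fin.append_left]; exact hb j
    | right j => rw [Fin.append_right]; exact hb' j
  · rw [Fin.sum_univ_add, Fin.sum_univ_add]
    simp only [Fin.append_left, Fin.append_right]
    ring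

lemma QRep.sum {k : ℕ} {ι : Type*} (s : Finset ι) (f : ι → ℝ[X])
    (h : ∀ i ∈ s, QRep k (f i)) : QRep k (∑ i ∈ s, f i) := by
  classical
  induction s using Finset.induction_on with
  | empty => simpa using QRep.zero k
  | insert _ _ hx ih =>
    rw [Finset.sum_insert hx]
    exact QRep.add (h _ (Finset.mem_insert_self _ _))
      (ih fun i hi => h i (Finset.mem_insert_of_mem hi))

lemma QRep.const {c : ℝ} (hc : 0 ≤ c) (k : ℕ) : QRep k (C c) := by
  refine ⟨0, 1, ![], ![C (Real.sqrt c)], by simp, by simp, ?_⟩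
  simp [← C_pow, Real.sq_sqrt hc]

lemma QRep.sq {g : ℝ[X]} {k : ℕ} (hg : g.natDegree ≤ k) : QRep k (g ^ 2) := by
  refine ⟨0, 1, ![], ![g], by simp, by simpa using hg, by simp⟩

lemma QRep.mul_sq {k d : ℕ} {p : ℝ[X]} (h : QRep k p) (g : ℝ[X]) (hg : g.natDegree ≤ d) :
    QRep (k + d) (g ^ 2 * p) := by
  obtain ⟨m, n, a, b, ha, hb, rfl⟩ := h
  refine ⟨m, n, fun i => a i * g, fun j => b j * g, ?_, ?_, ?_⟩
  · intro i
    rcases ha i with h0 | h0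
    · exact Or.inl (by simp only []; rw [h0, zero_mul])
    · exact Or.inr (lt_of_le_of_lt (natDegree_mul_le)
        (by have := lt_of_lt_of_le h0 (le_refl k); omega))
  · intro j
    exact le_trans natDegree_mul_le (by have := hb j; omega)
  · simp only [mul_pow]
    rw [← Finset.sum_mul, ← Finset.sum_mul]
    ring

lemma QRep.one_sub_X_sq_mul {k : ℕ} {p : ℝ[X]} (h : QRep k p) :
    QRep (k + 1) ((1 - X ^ 2) * p) := by
  obtain ⟨m, n, a, b, ha, hb, rfl⟩ := h
  refine ⟨n, m, b, fun i => (1 - X ^ 2) * a i, ?_, ?_, ?_⟩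
  · intro j
    exact Or.inr (lt_of_le_of_lt (hb j) (Nat.lt_succ_self k))
  · intro i
    rcases ha i with h0 | h0
    · simp [h0]
    · refine le_trans natDegree_mul_le ?_
      have h2 : (1 - X ^ 2 : ℝ[X]).natDegree ≤ 2 := by
        compute_degree
      omega
  · simp only [mul_pow]
    rw [← Finset.mul_sum]
    ring

lemma QRep.mul {k₁ k₂ : ℕ} {p₁ p₂ : ℝ[X]} (h₁ : QRep k₁ p₁) (h₂ : QRep k₂ p₂) :
    QRep (k₁ + k₂) (p₁ * p₂) := by
  obtain ⟨m, n, a, b, ha, hb, rfl⟩ := h₁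
  have key : ((1 - X ^ 2) * (∑ i, (a i) ^ 2) + ∑ j, (b j) ^ 2) * p₂
      = (∑ i, (a i) ^ 2 * ((1 - X ^ 2) * p₂)) + ∑ j, (b j) ^ 2 * p₂ := by
    rw [← Finset.sum_mul, ← Finset.sum_mul]
    ring
  rw [key]
  refine QRep.add (QRep.sum _ _ fun i _ => ?_) (QRep.sum _ _ fun j _ => ?_)
  · rcases ha i with h0 | h0
    · rw [h0]; simpa using QRep.zero _
    · have := (h₂.one_sub_X_sq_mul).mul_sq (a i) (le_refl _)
      exact this.mono (by omega)
  · have := h₂.mul_sq (b j) (hb j)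
    exact this.mono (by omega)

lemma QRep.one_sub_X_sq : QRep 1 (1 - X ^ 2 : ℝ[X]) := by
  refine ⟨1, 0, ![1], ![], ?_, by simp, by simp⟩
  intro i; right; fin_cases i <;> simp

lemma QRep.const_mul_one_add_X {c : ℝ} (hc : 0 ≤ c) : QRep 1 (C c * (1 + X)) := by
  have h2 : (0:ℝ) ≤ c / 2 := by linarith
  refine ⟨1, 1, ![C (Real.sqrt (c/2))], ![C (Real.sqrt (c/2)) * (1 + X)], ?_, ?_, ?_⟩
  · intro i; right; fin_cases i <;> simp
  · intro j; fin_cases j; exact le_trans natDegree_mul_le (by simpa using natDegree_add_le (1:ℝ[X]) X)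
  · simp only [Fin.sum_univ_one, Matrix.cons_val_zero, mul_pow, ← C_pow,
      Real.sq_sqrt h2]
    rw [show c = c/2 + c/2 by ring, C_add]
    ring

lemma QRep.const_mul_one_sub_X {c : ℝ} (hc : 0 ≤ c) : QRep 1 (C c * (1 - X)) := by
  have h2 : (0:ℝ) ≤ c / 2 := by linarith
  refine ⟨1, 1, ![C (Real.sqrt (c/2))], ![C (Real.sqrt (c/2)) * (1 - X)], ?_, ?_, ?_⟩
  · intro i; right; fin_cases i <;> simp
  · intro j; fin_cases j; exact le_trans natDegree_mul_le (by simpa using natDegree_sub_le (1:ℝ[X]) X)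
  · simp only [Fin.sum_univ_one, Matrix.cons_val_zero, mul_pow, ← C_pow,
      Real.sq_sqrt h2]
    rw [show c = c/2 + c/2 by ring, C_add]
    ring

lemma QRep.single_ge {r : ℝ} (hr : 1 ≤ r) : QRep 1 (C r - X) := by
  have h : C r - X = C (r - 1) + C 1 * (1 - X) := by
    simp only [C_sub, C_1]; ring
  rw [h]
  exact (QRep.const (by linarith) 1).add (QRep.const_mul_one_sub_X zero_le_one)

lemma QRep.single_le {s : ℝ} (hs : s ≤ -1) : QRep 1 (X - C s) := by
  have h : X - C s = C (-1 - s) + C 1 * (1 + X) := by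
    simp only [C_sub, C_1, C_neg]; ring
  rw [h]
  exact (QRep.const (by linarith) 1).add (QRep.const_mul_one_add_X zero_le_one)

lemma QRep.pair_gg {r r' : ℝ} (hr : 1 ≤ r) (hr' : 1 ≤ r') :
    QRep 1 ((C r - X) * (C r' - X)) := by
  have h : (C r - X) * (C r' - X)
      = C ((r - 1) * (r' - 1)) + C ((r - 1) + (r' - 1)) * (1 - X) + (1 - X) ^ 2 := by
    simp only [C_sub, C_add, C_mul, C_1]; ring
  rw [h]
  refine ((QRep.const (by nlinarith) 1).add
    (QRep.const_mul_one_sub_X (by linarith))).add (QRep.sq ?_)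
  simpa using natDegree_sub_le (1:ℝ[X]) X

lemma QRep.pair_ll {s s' : ℝ} (hs : s ≤ -1) (hs' : s' ≤ -1) :
    QRep 1 ((X - C s) * (X - C s')) := by
  have h : (X - C s) * (X - C s')
      = C ((-1 - s) * (-1 - s')) + C ((-1 - s) + (-1 - s')) * (1 + X) + (1 + X) ^ 2 := by
    simp only [C_sub, C_add, C_mul, C_1, C_neg]; ring
  rw [h]
  refine ((QRep.const (by nlinarith) 1).add
    (QRep.const_mul_one_add_X (by linarith))).add (QRep.sq ?_)
  simpa using natDegree_add_le (1:ℝ[X]) X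

lemma QRep.pair_gl {r s : ℝ} (hr : 1 ≤ r) (hs : s ≤ -1) :
    QRep 1 ((C r - X) * (X - C s)) := by
  have h : (C r - X) * (X - C s)
      = ((C ((r - 1) * (-1 - s)) + C (r - 1) * (1 + X)) + C (-1 - s) * (1 - X))
        + (1 - X ^ 2) := by
    simp only [C_sub, C_add, C_mul, C_1, C_neg]; ring
  rw [h]
  exact (((QRep.const (by nlinarith) 1).add
    (QRep.const_mul_one_add_X (by linarith))).add
    (QRep.const_mul_one_sub_X (by linarith))).add QRep.one_sub_X_sq

lemma QRep.two_sq {u v : ℝ[X]} (hu : u.natDegree ≤ 1) (hv : v.natDegree ≤ 1) :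
    QRep 1 (u ^ 2 + v ^ 2) := by
  refine ⟨0, 2, ![], ![u, v], by simp, ?_, by simp [Fin.sum_univ_two]⟩
  intro j; fin_cases j <;> simpa

/-- If a polynomial is nonnegative on `[-1,1]` off a finite set, it is nonnegative
on all of `[-1,1]`. -/
lemma nonneg_Icc_of_off_finset (F : Finset ℝ) (f : ℝ[X])
    (h : ∀ t ∈ Set.Icc (-1:ℝ) 1, t ∉ F → 0 ≤ f.eval t) :
    ∀ t ∈ Set.Icc (-1:ℝ) 1, 0 ≤ f.eval t := by
  intro t₀ ht₀
  by_contra hneg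
  push_neg at hneg
  have hU : IsOpen {x : ℝ | f.eval x < 0} := by
    have : {x : ℝ | f.eval x < 0} = (fun x => f.eval x) ⁻¹' (Set.Iio 0) := rfl
    rw [this]
    exact isOpen_Iio.preimage f.continuous
  obtain ⟨ε, hε, hball⟩ := Metric.isOpen_iff.mp hU t₀ hneg
  set a := max (-1 : ℝ) (t₀ - ε/2) with ha
  set b := min (1 : ℝ) (t₀ + ε/2) with hb
  have hab : a < b := by
    rw [ha, hb]
    rcases ht₀ with ⟨h1, h2⟩
    apply max_lt <;> apply lt_min <;> linarith
  have hsub : Set.Ioo a b ⊆ ↑F := by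
    intro x hx
    rcases hx with ⟨hxa, hxb⟩
    have hx1 : x ∈ Set.Icc (-1:ℝ) 1 :=
      ⟨le_of_lt (lt_of_le_of_lt (le_max_left _ _) hxa),
       le_of_lt (lt_of_lt_of_le hxb (min_le_left _ _))⟩
    have hxball : x ∈ Metric.ball t₀ ε := by
      rw [Real.ball_eq_Ioo]
      constructor
      · have := lt_of_le_of_lt (le_max_right (-1:ℝ) (t₀ - ε/2)) hxa
        linarith
      · have := lt_of_lt_of_le hxb (min_le_right (1:ℝ) (t₀ + ε/2))
        linarith
    have := hball hxball
    by_contra hxF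
    exact absurd (h x hx1 hxF) (not_le.mpr this)
  exact absurd (F.finite_toSet.subset hsub) (Set.Ioo_infinite hab)

lemma sq_dvd_of_interior_root {p : ℝ[X]} {r : ℝ}
    (hp : ∀ t ∈ Set.Icc (-1:ℝ) 1, 0 ≤ p.eval t) (hr : r ∈ Set.Ioo (-1:ℝ) 1)
    (hroot : p.IsRoot r) : (X - C r) ^ 2 ∣ p := by
  obtain ⟨p₁, hp₁⟩ := (dvd_iff_isRoot.mpr hroot)
  suffices hs : p₁.IsRoot r by
    obtain ⟨p₂, hp₂⟩ := (dvd_iff_isRoot.mpr hs)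
    exact ⟨p₂, by rw [hp₁, hp₂]; ring⟩
  by_contra h0
  rcases hr with ⟨hr1, hr2⟩
  rcases lt_or_gt_of_ne h0 with hlt | hgt
  · -- p₁.eval r < 0 : take t slightly to the right of r
    have hU : IsOpen {x : ℝ | p₁.eval x < 0} := isOpen_Iio.preimage p₁.continuous
    obtain ⟨ε, hε, hball⟩ := Metric.isOpen_iff.mp hU r hlt
    set t := min (r + ε/2) ((r + 1)/2) with ht
    have htr : r < t := by rw [ht]; apply lt_min <;> linarith
    have ht1 : t ≤ 1 := by
      rw [ht]; refine le_trans (min_le_right _ _) (by linarith)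
    have htball : t ∈ Metric.ball r ε := by
      rw [Real.ball_eq_Ioo]
      refine ⟨by linarith, lt_of_le_of_lt (min_le_left _ _) (by linarith)⟩
    have hpt : p₁.eval t < 0 := hball htball
    have hge : 0 ≤ p.eval t := hp t ⟨by linarith, ht1⟩
    rw [hp₁, eval_mul, eval_sub, eval_X, eval_C] at hge
    nlinarith
  · -- p₁.eval r > 0 : take t slightly to the left of r
    have hU : IsOpen {x : ℝ | 0 < p₁.eval x} := isOpen_Ioi.preimage p₁.continuous
    obtain ⟨ε, hε, hball⟩ := Metric.isOpen_iff.mp hU r hgt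
    set t := max (r - ε/2) ((r - 1)/2) with ht
    have htr : t < r := by rw [ht]; apply max_lt <;> linarith
    have ht1 : -1 ≤ t := by
      rw [ht]; refine le_trans (by linarith) (le_max_right _ _)
    have htball : t ∈ Metric.ball r ε := by
      rw [Real.ball_eq_Ioo]
      refine ⟨lt_of_lt_of_le (by linarith) (le_max_left _ _), by linarith⟩
    have hpt : 0 < p₁.eval t := hball htball
    have hge : 0 ≤ p.eval t := hp t ⟨ht1, by linarith⟩
    rw [hp₁, eval_mul, eval_sub, eval_X, eval_C] at hge
    nlinarith

lemma quad_factor {p : ℝ[X]} {z : ℂ}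
    (hroot : (p.map (algebraMap ℝ ℂ)).IsRoot z) (him : z.im ≠ 0) :
    ((X - C z.re) ^ 2 + C z.im ^ 2) ∣ p := by
  have hcomp : (starRingEnd ℂ).comp (algebraMap ℝ ℂ) = algebraMap ℝ ℂ := by
    ext x; simp [Complex.conj_ofReal]
  have hmap : ((X - C z.re) ^ 2 + C z.im ^ 2).map (algebraMap ℝ ℂ)
      = (X - C z) * (X - C ((starRingEnd ℂ) z)) := by
    have e1 : (C z : ℂ[X]) = C (z.re : ℂ) + C (z.im : ℂ) * C Complex.I := by
      rw [← C_mul, ← C_add, Complex.re_add_im]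
    have e2' : (starRingEnd ℂ) z = (z.re : ℂ) - (z.im : ℂ) * Complex.I := by
      apply Complex.ext <;> simp
    have e2 : (C ((starRingEnd ℂ) z) : ℂ[X])
        = C (z.re : ℂ) - C (z.im : ℂ) * C Complex.I := by
      rw [← C_mul, ← C_sub, e2']
    have eI : (C Complex.I : ℂ[X]) ^ 2 = -1 := by
      rw [← C_pow, Complex.I_sq, map_neg, map_one]
    simp only [Polynomial.map_add, Polynomial.map_pow, Polynomial.map_sub,
      Polynomial.map_X, Polynomial.map_C, Complex.coe_algebraMap]
    rw [e1, e2]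
    linear_combination (C (z.im : ℂ)) ^ 2 * eI
  have hconjroot : (p.map (algebraMap ℝ ℂ)).IsRoot ((starRingEnd ℂ) z) := by
    have h0 : eval₂ (algebraMap ℝ ℂ) z p = 0 := by
      rwa [IsRoot, eval_map] at hroot
    have := Polynomial.hom_eval₂ p (algebraMap ℝ ℂ) (starRingEnd ℂ) z
    rw [IsRoot, eval_map, ← hcomp, ← this, h0, map_zero]
  obtain ⟨h, hh⟩ := dvd_iff_isRoot.mpr hroot
  have hzne : ((starRingEnd ℂ) z) - z ≠ 0 := by
    rw [sub_ne_zero]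
    intro hcontra
    exact him (Complex.conj_eq_iff_im.mp hcontra)
  have hrooth : h.IsRoot ((starRingEnd ℂ) z) := by
    have := hconjroot
    rw [IsRoot, hh, eval_mul, eval_sub, eval_X, eval_C] at this
    rcases mul_eq_zero.mp this with h' | h'
    · exact absurd h' hzne
    · exact h'
  obtain ⟨h₂, hh₂⟩ := dvd_iff_isRoot.mpr hrooth
  have : ((X - C z.re) ^ 2 + C z.im ^ 2).map (algebraMap ℝ ℂ) ∣ p.map (algebraMap ℝ ℂ) := by
    rw [hmap, hh, hh₂]
    exact ⟨h₂, by ring⟩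
  exact (Polynomial.map_dvd_map' (algebraMap ℝ ℂ)).mp this

lemma strip_aux {N : ℕ} {p Q p₂ : ℝ[X]} (hfac : p = Q * p₂) (hQ : QRep 1 Q)
    (hrep : QRep ((p₂.natDegree + 1) / 2) p₂)
    (harith : 1 + (p₂.natDegree + 1) / 2 ≤ (N + 1) / 2) : QRep ((N + 1) / 2) p := by
  have := hQ.mul hrep
  rw [← hfac] at this
  exact this.mono harith

lemma real_root_of_im_zero {f : ℝ[X]} {z : ℂ}
    (hroot : (f.map (algebraMap ℝ ℂ)).IsRoot z) (him : z.im = 0) : f.IsRoot z.re := by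
  have hz : ((z.re : ℝ) : ℂ) = z := Complex.ext (by simp) (by simp [him])
  have h1 : (f.map (algebraMap ℝ ℂ)).eval ((z.re : ℝ) : ℂ) = 0 := by
    rw [hz]; exact hroot
  rw [eval_map] at h1
  have h2 := Polynomial.eval₂_at_apply (p := f) (algebraMap ℝ ℂ) z.re
  rw [Complex.coe_algebraMap] at h2
  rw [h2] at h1
  exact Complex.ofReal_eq_zero.mp h1

lemma map_degree_ne_zero {f : ℝ[X]} (hf : f ≠ 0) (hdeg : 1 ≤ f.natDegree) :
    (f.map (algebraMap ℝ ℂ)).degree ≠ 0 := by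
  rw [Polynomial.degree_map, degree_eq_natDegree hf]
  intro h
  have : f.natDegree = 0 := by exact_mod_cast h
  omega

lemma quad_strip {N : ℕ}
    (ih : ∀ m, m < N → ∀ p : ℝ[X], p.natDegree = m →
      (∀ t ∈ Set.Icc (-1:ℝ) 1, 0 ≤ p.eval t) → QRep ((m + 1) / 2) p)
    {p : ℝ[X]} {z : ℂ} (hN : p.natDegree = N) (hp0 : p ≠ 0)
    (hp : ∀ t ∈ Set.Icc (-1:ℝ) 1, 0 ≤ p.eval t)
    (hroot : (p.map (algebraMap ℝ ℂ)).IsRoot z) (him : z.im ≠ 0) :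
    QRep ((N + 1) / 2) p := by
  obtain ⟨p₃, hp₃⟩ := quad_factor hroot him
  have hqdeg : ((X - C z.re) ^ 2 + C z.im ^ 2).natDegree = 2 := by
    compute_degree!
  have hq0 : ((X - C z.re) ^ 2 + C z.im ^ 2) ≠ 0 := by
    intro h; rw [h] at hqdeg; simp at hqdeg
  have hp₃0 : p₃ ≠ 0 := by
    intro h; rw [h, mul_zero] at hp₃; exact hp0 hp₃
  have hdeg : N = 2 + p₃.natDegree := by
    rw [← hN, hp₃, natDegree_mul hq0 hp₃0, hqdeg]
  have hqpos : ∀ t : ℝ, 0 < ((X - C z.re) ^ 2 + C z.im ^ 2).eval t := by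
    intro t
    have h1 : 0 < z.im ^ 2 :=
      lt_of_le_of_ne (sq_nonneg _) (Ne.symm (pow_ne_zero 2 him))
    simp only [eval_add, eval_pow, eval_sub, eval_X, eval_C]
    nlinarith [sq_nonneg (t - z.re)]
  have hp₃nn : ∀ t ∈ Set.Icc (-1:ℝ) 1, 0 ≤ p₃.eval t := by
    intro t ht
    have hpt := hp t ht
    rw [hp₃, eval_mul] at hpt
    have := hqpos t
    nlinarith
  have hQrep : QRep 1 ((X - C z.re) ^ 2 + C z.im ^ 2) :=
    QRep.two_sq (le_of_eq (natDegree_X_sub_C _)) (by simp)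
  exact strip_aux hp₃ hQrep (ih _ (by omega) p₃ rfl hp₃nn) (by omega)

lemma main_rep (N : ℕ) : ∀ (p : ℝ[X]), p.natDegree = N →
    (∀ t ∈ Set.Icc (-1:ℝ) 1, 0 ≤ p.eval t) → QRep ((N + 1) / 2) p := by
  induction N using Nat.strong_induction_on with
  | _ N ih =>
  intro p hN hp
  rcases Nat.eq_zero_or_pos N with hN0 | hNpos
  · subst hN0
    have hc : p = C (p.coeff 0) := eq_C_of_natDegree_eq_zero hN
    have h0 : 0 ≤ p.coeff 0 := by
      have := hp 0 (by norm_num)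
      rwa [hc, eval_C] at this
    rw [hc]
    exact QRep.const h0 0
  have hp0 : p ≠ 0 := by
    intro h; rw [h, natDegree_zero] at hN; omega
  by_cases hint : ∃ r ∈ Set.Ioo (-1:ℝ) 1, p.IsRoot r
  · -- interior root: strip a square
    obtain ⟨r, hr, hroot⟩ := hint
    obtain ⟨p₂, hp₂⟩ := sq_dvd_of_interior_root hp hr hroot
    have hp₂0 : p₂ ≠ 0 := by
      intro h; rw [h, mul_zero] at hp₂; exact hp0 hp₂
    have hdeg : N = 2 + p₂.natDegree := by
      rw [← hN, hp₂, natDegree_mul (pow_ne_zero _ (X_sub_C_ne_zero r)) hp₂0,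
        natDegree_pow, natDegree_X_sub_C]
    have hp₂nn : ∀ t ∈ Set.Icc (-1:ℝ) 1, 0 ≤ p₂.eval t := by
      apply nonneg_Icc_of_off_finset {r}
      intro t ht htF
      have htr : t ≠ r := by simpa using htF
      have hpt := hp t ht
      rw [hp₂, eval_mul, eval_pow, eval_sub, eval_X, eval_C] at hpt
      have h2 : 0 < (t - r) ^ 2 :=
        lt_of_le_of_ne (sq_nonneg _) (Ne.symm (pow_ne_zero 2 (sub_ne_zero.mpr htr)))
      nlinarith
    have hrep₂ := ih _ (by omega) p₂ rfl hp₂nn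
    have := hrep₂.mul_sq (X - C r) (le_of_eq (natDegree_X_sub_C r))
    rw [← hp₂] at this
    exact this.mono (by omega)
  · have houter : ∀ r : ℝ, p.IsRoot r → r ≤ -1 ∨ 1 ≤ r := by
      intro r hr
      by_contra hc
      push_neg at hc
      exact hint ⟨r, ⟨hc.1, hc.2⟩, hr⟩
    by_cases hreal : ∃ r : ℝ, p.IsRoot r
    · obtain ⟨r, hroot⟩ := hreal
      obtain ⟨p₁, hp₁⟩ := dvd_iff_isRoot.mpr hroot
      have hp₁0 : p₁ ≠ 0 := by
        intro h; rw [h, mul_zero] at hp₁; exact hp0 hp₁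
      have hdeg1 : N = 1 + p₁.natDegree := by
        rw [← hN, hp₁, natDegree_mul (X_sub_C_ne_zero r) hp₁0, natDegree_X_sub_C]
      rcases Nat.even_or_odd N with hNe | hNo
      · -- N even : need to strip two roots (or a complex quadratic)
        have hNge2 : 2 ≤ N := by
          rcases hNe with ⟨w, hw⟩; omega
        obtain ⟨z, hz⟩ := IsAlgClosed.exists_root _
          (map_degree_ne_zero hp₁0 (by omega))
        by_cases him : z.im = 0
        · -- second real root r' = z.re
          set r' := z.re with hr'def
          have hr'root : p₁.IsRoot r' := real_root_of_im_zero hz him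
          have hr'p : p.IsRoot r' := by
            rw [IsRoot, hp₁, eval_mul, hr'root, mul_zero]
          obtain ⟨p₂, hp₂⟩ := dvd_iff_isRoot.mpr hr'root
          have hp₂0 : p₂ ≠ 0 := by
            intro h; rw [h, mul_zero] at hp₂; exact hp₁0 hp₂
          have hdeg2 : N = 2 + p₂.natDegree := by
            rw [hp₂, natDegree_mul (X_sub_C_ne_zero r') hp₂0, natDegree_X_sub_C] at hdeg1
            omega
          have hfacfull : p = (X - C r) * (X - C r') * p₂ := by
            rw [hp₁, hp₂]; ring
          have hevalfull : ∀ t : ℝ, p.eval t = (t - r) * (t - r') * p₂.eval t := by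
            intro t; rw [hfacfull]; simp [eval_mul]
          rcases houter r hroot with hrle | hrge
          · rcases houter r' hr'p with hr'le | hr'ge
            · -- both ≤ -1 : Q = (X - C r) * (X - C r')
              have hp₂nn : ∀ t ∈ Set.Icc (-1:ℝ) 1, 0 ≤ p₂.eval t := by
                apply nonneg_Icc_of_off_finset {r, r'}
                intro t ht htF
                simp only [Finset.mem_insert, Finset.mem_singleton, not_or] at htF
                have h1 : r < t := lt_of_le_of_ne (le_trans hrle ht.1) (Ne.symm htF.1)
                have h2 : r' < t := lt_of_le_of_ne (le_trans hr'le ht.1) (Ne.symm htF.2)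
                have hpt := hp t ht
                rw [hevalfull t] at hpt
                nlinarith [mul_pos (sub_pos.mpr h1) (sub_pos.mpr h2)]
              refine strip_aux (p₂ := p₂) (by rw [hfacfull])
                (QRep.pair_ll hrle hr'le) (ih _ (by omega) p₂ rfl hp₂nn) (by omega)
            · -- r ≤ -1, r' ≥ 1 : Q = (C r' - X) * (X - C r), p = Q * (-p₂)
              have hp₂nn : ∀ t ∈ Set.Icc (-1:ℝ) 1, 0 ≤ (-p₂).eval t := by
                apply nonneg_Icc_of_off_finset {r, r'}
                intro t ht htF
                simp only [Finset.mem_insert, Finset.mem_singleton, not_or] at htF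
                have h1 : r < t := lt_of_le_of_ne (le_trans hrle ht.1) (Ne.symm htF.1)
                have h2 : t < r' := lt_of_le_of_ne (le_trans ht.2 hr'ge) htF.2
                have hpt := hp t ht
                rw [hevalfull t] at hpt
                rw [eval_neg]
                nlinarith [mul_pos (sub_pos.mpr h1) (sub_pos.mpr h2)]
              refine strip_aux (p₂ := -p₂) (by rw [hfacfull]; ring)
                (QRep.pair_gl hr'ge hrle) (ih _ (by rw [natDegree_neg]; omega) _ rfl hp₂nn)
                (by rw [natDegree_neg]; omega)
          · rcases houter r' hr'p with hr'le | hr'ge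
            · -- r ≥ 1, r' ≤ -1 : Q = (C r - X) * (X - C r'), p = Q * (-p₂)
              have hp₂nn : ∀ t ∈ Set.Icc (-1:ℝ) 1, 0 ≤ (-p₂).eval t := by
                apply nonneg_Icc_of_off_finset {r, r'}
                intro t ht htF
                simp only [Finset.mem_insert, Finset.mem_singleton, not_or] at htF
                have h1 : t < r := lt_of_le_of_ne (le_trans ht.2 hrge) htF.1
                have h2 : r' < t := lt_of_le_of_ne (le_trans hr'le ht.1) (Ne.symm htF.2)
                have hpt := hp t ht
                rw [hevalfull t] at hpt
                rw [eval_neg]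
                nlinarith [mul_pos (sub_pos.mpr h2) (sub_pos.mpr h1)]
              refine strip_aux (p₂ := -p₂) (by rw [hfacfull]; ring)
                (QRep.pair_gl hrge hr'le) (ih _ (by rw [natDegree_neg]; omega) _ rfl hp₂nn)
                (by rw [natDegree_neg]; omega)
            · -- both ≥ 1 : Q = (C r - X) * (C r' - X)
              have hp₂nn : ∀ t ∈ Set.Icc (-1:ℝ) 1, 0 ≤ p₂.eval t := by
                apply nonneg_Icc_of_off_finset {r, r'}
                intro t ht htF
                simp only [Finset.mem_insert, Finset.mem_singleton, not_or] at htF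
                have h1 : t < r := lt_of_le_of_ne (le_trans ht.2 hrge) htF.1
                have h2 : t < r' := lt_of_le_of_ne (le_trans ht.2 hr'ge) htF.2
                have hpt := hp t ht
                rw [hevalfull t] at hpt
                nlinarith [mul_pos (sub_pos.mpr h1) (sub_pos.mpr h2)]
              refine strip_aux (p₂ := p₂) (by rw [hfacfull]; ring)
                (QRep.pair_gg hrge hr'ge) (ih _ (by omega) p₂ rfl hp₂nn) (by omega)
        · -- nonreal root of p₁, hence of p : quadratic strip
          have hzp : (p.map (algebraMap ℝ ℂ)).IsRoot z := by
            rw [IsRoot, hp₁, Polynomial.map_mul, eval_mul, hz, mul_zero]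
          exact quad_strip ih hN hp0 hp hzp him
      · -- N odd : strip one root
        have hO : N % 2 = 1 := Nat.odd_iff.mp hNo
        rcases houter r hroot with hrle | hrge
        · -- r ≤ -1 : Q = X - C r, p = Q * p₁
          have hp₁nn : ∀ t ∈ Set.Icc (-1:ℝ) 1, 0 ≤ p₁.eval t := by
            apply nonneg_Icc_of_off_finset {r}
            intro t ht htF
            have h1 : r < t := lt_of_le_of_ne (le_trans hrle ht.1)
              (Ne.symm (by simpa using htF))
            have hpt := hp t ht
            rw [hp₁, eval_mul, eval_sub, eval_X, eval_C] at hpt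
            nlinarith
          exact strip_aux hp₁ (QRep.single_le hrle) (ih _ (by omega) p₁ rfl hp₁nn)
            (by omega)
        · -- r ≥ 1 : Q = C r - X, p = Q * (-p₁)
          have hp₁nn : ∀ t ∈ Set.Icc (-1:ℝ) 1, 0 ≤ (-p₁).eval t := by
            apply nonneg_Icc_of_off_finset {r}
            intro t ht htF
            have h1 : t < r := lt_of_le_of_ne (le_trans ht.2 hrge) (by simpa using htF)
            have hpt := hp t ht
            rw [hp₁, eval_mul, eval_sub, eval_X, eval_C] at hpt
            rw [eval_neg]
            nlinarith
          refine strip_aux (p₂ := -p₁) (by rw [hp₁]; ring)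
            (QRep.single_ge hrge) (ih _ (by rw [natDegree_neg]; omega) _ rfl hp₁nn)
            (by rw [natDegree_neg]; omega)
    · -- no real root : quadratic strip
      push_neg at hreal
      obtain ⟨z, hz⟩ := IsAlgClosed.exists_root _ (map_degree_ne_zero hp0 (by omega))
      have him : z.im ≠ 0 := by
        intro him0
        exact hreal z.re (real_root_of_im_zero hz him0)
      exact quad_strip ih hN hp0 hp hz him

theorem lukacs_even (k : ℕ) (p : ℝ[X]) (hdeg : p.natDegree ≤ 2 * k) :
    (∀ t ∈ Set.Icc (-1 : ℝ) 1, 0 ≤ p.eval t) ↔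
      ∃ q s : ℝ[X], IsSOSOfDegLE (k - 1) q ∧ IsSOSOfDegLE k s ∧
        p = (1 - X ^ 2) * q + s := by
  constructor
  · intro h
    have hrep := (main_rep p.natDegree p rfl h).mono
      (show (p.natDegree + 1) / 2 ≤ k by omega)
    obtain ⟨m, n, a, b, ha, hb, hfac⟩ := hrep
    refine ⟨∑ i, (a i) ^ 2, ∑ j, (b j) ^ 2, ⟨m, a, ?_, rfl⟩, ⟨n, b, hb, rfl⟩, hfac⟩
    intro i
    rcases ha i with h0 | h0
    · rw [h0, natDegree_zero]; omega
    · omega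
  · rintro ⟨q, s, ⟨m, a, ha, rfl⟩, ⟨n, b, hb, rfl⟩, rfl⟩
    intro t ht
    rw [eval_add, eval_mul]
    have hq : 0 ≤ (∑ i, (a i) ^ 2).eval t := by
      rw [eval_finset_sum]
      exact Finset.sum_nonneg fun i _ => by rw [eval_pow]; positivity
    have hs : 0 ≤ (∑ j, (b j) ^ 2).eval t := by
      rw [eval_finset_sum]
      exact Finset.sum_nonneg fun j _ => by rw [eval_pow]; positivity
    have h1 : 0 ≤ (1 - X ^ 2 : ℝ[X]).eval t := by
      rcases ht with ⟨h1, h2⟩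
      simp only [eval_sub, eval_one, eval_pow, eval_X]
      nlinarith
    exact add_nonneg (mul_nonneg h1 hq) hs
end

section
/- Let f : [−1,1] → ℝ be continuous with nonnegative (n+1)-st derivative on (−1,1), where n = 2k−1 is odd, and let t₁,…,t_k be the zeros of the Legendre polynomial of degree k. If p is the unique polynomial of degree at most n satisfying p(t_ℓ) = f(t_ℓ) and p′(t_ℓ) = f′(t_ℓ) for ℓ = 1,…,k, then p(t) ≤ f(t) for all t ∈ [−1,1]. -/
open Polynomial Set

/-- The Legendre polynomial of degree `k` (Rodrigues' formula). -/
noncomputable def legendrePoly (k : ℕ) : ℝ[X] :=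
  Polynomial.C (1 / (2 ^ k * (Nat.factorial k : ℝ))) *
    Polynomial.derivative^[k] ((X ^ 2 - 1) ^ k)

/-- Polynomial evaluation is `C^∞`. -/
lemma aux_contDiff_polyeval (Q : ℝ[X]) (n : ℕ∞) : ContDiff ℝ n (fun y : ℝ => Q.eval y) := by
  induction Q using Polynomial.induction_on' with
  | add p q hp hq => simpa [Polynomial.eval_add] using hp.add hq
  | monomial m c =>
      simpa [Polynomial.eval_monomial] using (contDiff_const (c := c)).mul (contDiff_id.pow m)

/-- One Rolle step applied to a finite set of zeros: from `n+1` zeros in `[a,b]` we get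
`n` zeros of the derivative in `(a,b)`, all strictly below the maximum of `S` and outside `S`. -/
lemma aux_rolle_finset {a b : ℝ} {g g' : ℝ → ℝ}
    (hgc : ContinuousOn g (Icc a b))
    (hgd : ∀ x ∈ Ioo a b, HasDerivAt g (g' x) x) :
    ∀ (n : ℕ) (S : Finset ℝ), (↑S : Set ℝ) ⊆ Icc a b → (∀ x ∈ S, g x = 0) →
      S.card = n + 1 →
      ∃ S' : Finset ℝ, S'.card = n ∧ (↑S' : Set ℝ) ⊆ Ioo a b ∧
        (∀ y ∈ S', g' y = 0) ∧ (∀ y ∈ S', y ∉ S) ∧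
        (∀ y ∈ S', ∃ z ∈ S, y < z) := by
  intro n
  induction n with
  | zero =>
      intro S _ _ _
      exact ⟨∅, by simp, by simp, by simp, by simp, by simp⟩
  | succ n IH =>
      intro S hS hz hcard
      have hne : S.Nonempty := Finset.card_pos.mp (by omega)
      set M := S.max' hne with hM
      have hMS : M ∈ S := S.max'_mem hne
      set S₀ := S.erase M with hS₀def
      have hcard₀ : S₀.card = n + 1 := by
        rw [hS₀def, Finset.card_erase_of_mem hMS]; omega
      have hne₀ : S₀.Nonempty := Finset.card_pos.mp (by omega)
      set M₀ := S₀.max' hne₀ with hM₀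
      have hM₀S₀ : M₀ ∈ S₀ := S₀.max'_mem hne₀
      have hM₀S : M₀ ∈ S := Finset.mem_of_mem_erase hM₀S₀
      have hM₀M : M₀ < M :=
        lt_of_le_of_ne (S.le_max' _ hM₀S) (Finset.ne_of_mem_erase hM₀S₀)
      have hS₀sub : (↑S₀ : Set ℝ) ⊆ Icc a b := fun y hy =>
        hS (Finset.mem_coe.mpr (Finset.mem_of_mem_erase (Finset.mem_coe.mp hy)))
      obtain ⟨S', hc', hsub', hz', hnot', hlt'⟩ :=
        IH S₀ hS₀sub (fun y hy => hz y (Finset.mem_of_mem_erase hy)) hcard₀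
      -- everything in S₀ is ≤ M₀
      have hleM₀ : ∀ z ∈ S₀, z ≤ M₀ := fun z hz => S₀.le_max' z hz
      have hSmem : ∀ z ∈ S, z = M ∨ z ∈ S₀ := by
        intro z hzS
        by_cases h : z = M
        · exact Or.inl h
        · exact Or.inr (Finset.mem_erase.mpr ⟨h, hzS⟩)
      have haM₀ : a ≤ M₀ := (hS (Finset.mem_coe.mpr hM₀S)).1
      have hMb : M ≤ b := (hS (Finset.mem_coe.mpr hMS)).2
      -- Rolle on [M₀, M]
      obtain ⟨c, hcmem, hc0⟩ :=
        exists_hasDerivAt_eq_zero (f := g) (f' := g') hM₀M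
          (hgc.mono (Icc_subset_Icc haM₀ hMb))
          (by rw [hz M₀ hM₀S, hz M hMS])
          (fun x hx => hgd x (Ioo_subset_Ioo haM₀ hMb hx))
      have hclt : ∀ y ∈ S', y < c := by
        intro y hy
        obtain ⟨z, hzS₀, hyz⟩ := hlt' y hy
        exact lt_of_lt_of_le hyz (le_trans (hleM₀ z hzS₀) (le_of_lt hcmem.1))
      have hcnot : c ∉ S' := fun h => lt_irrefl c (hclt c h)
      refine ⟨insert c S', ?_, ?_, ?_, ?_, ?_⟩
      · rw [Finset.card_insert_of_notMem hcnot, hc']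
      · intro y hy
        rcases Finset.mem_insert.mp (Finset.mem_coe.mp hy) with rfl | hyS'
        · exact ⟨lt_of_le_of_lt haM₀ hcmem.1, lt_of_lt_of_le hcmem.2 hMb⟩
        · exact hsub' (Finset.mem_coe.mpr hyS')
      · intro y hy
        rcases Finset.mem_insert.mp hy with rfl | hyS'
        · exact hc0
        · exact hz' y hyS'
      · intro y hy hyS
        rcases Finset.mem_insert.mp hy with h | hyS'
        · subst h
          rcases hSmem y hyS with h' | h'
          · exact lt_irrefl M (h' ▸ hcmem.2)
          · exact absurd (hleM₀ y h') (not_le.mpr hcmem.1)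
        · have hyM₀ : y < M₀ := by
            obtain ⟨z, hzS₀, hyz⟩ := hlt' y hyS'
            exact lt_of_lt_of_le hyz (hleM₀ z hzS₀)
          rcases hSmem y hyS with h' | h'
          · exact absurd h' (ne_of_lt (lt_trans hyM₀ hM₀M))
          · exact hnot' y hyS' h'
      · intro y hy
        rcases Finset.mem_insert.mp hy with rfl | hyS'
        · exact ⟨M, hMS, hcmem.2⟩
        · obtain ⟨z, hzS₀, hyz⟩ := hlt' y hyS'
          exact ⟨z, Finset.mem_of_mem_erase hzS₀, hyz⟩

/-- Iterated Rolle: a `C^m` function on `(a,b)` with `m+1` distinct zeros in `(a,b)` has a zero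
of its `m`-th derivative in `(a,b)`. -/
lemma aux_multi_rolle {a b : ℝ} :
    ∀ (m : ℕ) (g : ℝ → ℝ), ContDiffOn ℝ m g (Ioo a b) →
      ∀ S : Finset ℝ, (↑S : Set ℝ) ⊆ Ioo a b → (∀ x ∈ S, g x = 0) → S.card = m + 1 →
      ∃ ξ ∈ Ioo a b, iteratedDerivWithin m g (Ioo a b) ξ = 0 := by
  intro m
  induction m with
  | zero =>
      intro g _ S hS hz hcard
      have hne : S.Nonempty := Finset.card_pos.mp (by omega)
      obtain ⟨ξ, hξ⟩ := hne
      exact ⟨ξ, hS (Finset.mem_coe.mpr hξ), by simpa using hz ξ hξ⟩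
  | succ m IH =>
      intro g hg S hS hz hcard
      have hso : IsOpen (Ioo a b) := isOpen_Ioo
      have hu : UniqueDiffOn ℝ (Ioo a b) := hso.uniqueDiffOn
      have hdiff : DifferentiableOn ℝ g (Ioo a b) := by
        apply hg.differentiableOn
        exact_mod_cast Nat.succ_ne_zero m
      have hgd : ∀ x ∈ Ioo a b, HasDerivAt g (derivWithin g (Ioo a b) x) x := by
        intro x hx
        have h1 : DifferentiableAt ℝ g x :=
          (hdiff x hx).differentiableAt (hso.mem_nhds hx)
        rw [derivWithin_of_isOpen hso hx]
        exact h1.hasDerivAt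
      have hne : S.Nonempty := Finset.card_pos.mp (by omega)
      have h2 : 1 < S.card := by omega
      have hAB : S.min' hne < S.max' hne := S.min'_lt_max'_of_card h2
      have hAmem : S.min' hne ∈ Ioo a b := hS (Finset.mem_coe.mpr (S.min'_mem hne))
      have hBmem : S.max' hne ∈ Ioo a b := hS (Finset.mem_coe.mpr (S.max'_mem hne))
      have hIccsub : Icc (S.min' hne) (S.max' hne) ⊆ Ioo a b := fun y hy =>
        ⟨lt_of_lt_of_le hAmem.1 hy.1, lt_of_le_of_lt hy.2 hBmem.2⟩
      have hScard : S.card = m + 1 + 1 := hcard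
      obtain ⟨S', hc', hsub', hz', _, _⟩ :=
        aux_rolle_finset (a := S.min' hne) (b := S.max' hne)
          (hdiff.continuousOn.mono hIccsub)
          (fun x hx => hgd x (hIccsub (Ioo_subset_Icc_self hx)))
          (m + 1) S
          (fun y hy => ⟨S.min'_le y (Finset.mem_coe.mp hy), S.le_max' y (Finset.mem_coe.mp hy)⟩)
          hz hScard
      have hsub'' : (↑S' : Set ℝ) ⊆ Ioo a b := fun y hy =>
        hIccsub (Ioo_subset_Icc_self (hsub' hy))
      have hg' : ContDiffOn ℝ m (derivWithin g (Ioo a b)) (Ioo a b) := by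
        apply hg.derivWithin hu
        exact_mod_cast le_refl (m + 1 : ℕ)
      obtain ⟨ξ, hξmem, hξ⟩ := IH (derivWithin g (Ioo a b)) hg' S' hsub'' hz' hc'
      refine ⟨ξ, hξmem, ?_⟩
      rw [iteratedDerivWithin_succ']
      exact hξ

/-- The iterated derivative within an open set of a polynomial evaluation map. -/
lemma aux_iteratedDerivWithin_polyeval {s : Set ℝ} (hs : IsOpen s) :
    ∀ (n : ℕ) (Q : ℝ[X]) (x : ℝ), x ∈ s →
      iteratedDerivWithin n (fun y => Q.eval y) s x = (Polynomial.derivative^[n] Q).eval x := by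
  intro n
  induction n with
  | zero => intro Q x _; simp
  | succ n IH =>
      intro Q x hx
      rw [iteratedDerivWithin_succ', Function.iterate_succ_apply]
      have hEq : Set.EqOn (derivWithin (fun y => Q.eval y) s)
          (fun y => (Polynomial.derivative Q).eval y) s := by
        intro y hy
        rw [derivWithin_of_isOpen hs hy]
        exact Q.deriv
      calc iteratedDerivWithin n (derivWithin (fun y => Q.eval y) s) s x
          = iteratedDerivWithin n (fun y => (Polynomial.derivative Q).eval y) s x :=
            iteratedDerivWithin_congr hEq hx
        _ = (Polynomial.derivative^[n] (Polynomial.derivative Q)).eval x :=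
            IH (Polynomial.derivative Q) x hx

/-- All roots of the `k`-th Legendre polynomial lie in `(-1, 1)`. -/
lemma aux_legendre_roots_mem_Ioo (k : ℕ) (hk : 1 ≤ k) {r : ℝ}
    (hr : (legendrePoly k).eval r = 0) : r ∈ Ioo (-1 : ℝ) 1 := by
  set u : ℝ[X] := (X ^ 2 - 1) ^ k with hu
  -- basic facts on u
  have hmon2 : ((X : ℝ[X]) ^ 2 - 1).Monic := by
    have : ((X : ℝ[X]) ^ 2 - 1) = X ^ 2 - C 1 := by simp
    rw [this]
    exact Polynomial.monic_X_pow_sub_C (1 : ℝ) (by norm_num)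
  have hmonu : u.Monic := by rw [hu]; exact hmon2.pow k
  have hdeg2 : ((X : ℝ[X]) ^ 2 - 1).natDegree = 2 := by
    have : ((X : ℝ[X]) ^ 2 - 1) = X ^ 2 - C 1 := by simp
    rw [this]
    exact Polynomial.natDegree_X_pow_sub_C
  have hdegu : u.natDegree = 2 * k := by
    rw [hu, hmon2.natDegree_pow, hdeg2]; ring
  -- the k-th iterated derivative has nonzero coeff at degree k
  have hcoeff : (Polynomial.derivative^[k] u).coeff k ≠ 0 := by
    rw [Polynomial.coeff_iterate_derivative]
    have hkk : k + k = u.natDegree := by omega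
    rw [hkk, hmonu.coeff_natDegree, nsmul_eq_mul, mul_one]
    have h0 : (u.natDegree).descFactorial k ≠ 0 := by
      rw [Ne, Nat.descFactorial_eq_zero_iff_lt]
      omega
    exact_mod_cast h0
  have hDk_ne : Polynomial.derivative^[k] u ≠ 0 := fun h => hcoeff (by rw [h, Polynomial.coeff_zero])
  have hDk_deg : (Polynomial.derivative^[k] u).natDegree = k := by
    have h1 : (Polynomial.derivative^[k] u).natDegree ≤ k := by
      have := Polynomial.natDegree_iterate_derivative u k
      omega
    have h2 : k ≤ (Polynomial.derivative^[k] u).natDegree :=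
      Polynomial.le_natDegree_of_ne_zero hcoeff
    omega
  -- find k distinct roots of derivative^[k] u in (-1,1) by iterated Rolle
  have hzeros : ∀ j ≤ k, ∃ S : Finset ℝ, S.card = j ∧ (↑S : Set ℝ) ⊆ Ioo (-1 : ℝ) 1 ∧
      ∀ y ∈ S, (Polynomial.derivative^[j] u).eval y = 0 := by
    intro j
    induction j with
    | zero => exact fun _ => ⟨∅, by simp, by simp, by simp⟩
    | succ j IH =>
        intro hj
        obtain ⟨S, hc, hsub, hz⟩ := IH (Nat.le_of_succ_le hj)
        -- endpoints are zeros of derivative^[j] u since j < k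
        have hdvd : ((X : ℝ[X]) ^ 2 - 1) ^ (k - j) ∣ Polynomial.derivative^[j] u :=
          Polynomial.pow_sub_dvd_iterate_derivative_pow _ k j
        obtain ⟨q, hq⟩ := hdvd
        have hkj : k - j ≠ 0 := by omega
        have hev : ∀ e : ℝ, e ^ 2 - 1 = 0 → (Polynomial.derivative^[j] u).eval e = 0 := by
          intro e he
          rw [hq]
          simp [he, zero_pow hkj]
        have hev1 : (Polynomial.derivative^[j] u).eval 1 = 0 := hev 1 (by norm_num)
        have hevm1 : (Polynomial.derivative^[j] u).eval (-1) = 0 := hev (-1) (by norm_num)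
        -- zero set of card j+2
        have h1S : (1 : ℝ) ∉ S := fun h => lt_irrefl (1 : ℝ) (hsub (Finset.mem_coe.mpr h)).2
        have hm1S : (-1 : ℝ) ∉ insert (1 : ℝ) S := by
          intro h
          rcases Finset.mem_insert.mp h with h | h
          · norm_num at h
          · exact lt_irrefl (-1 : ℝ) (hsub (Finset.mem_coe.mpr h)).1
        set T : Finset ℝ := insert (-1 : ℝ) (insert (1 : ℝ) S) with hT
        have hTcard : T.card = j + 1 + 1 := by
          rw [hT, Finset.card_insert_of_notMem hm1S, Finset.card_insert_of_notMem h1S, hc]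
        have hTsub : (↑T : Set ℝ) ⊆ Icc (-1 : ℝ) 1 := by
          intro y hy
          rcases Finset.mem_insert.mp (Finset.mem_coe.mp hy) with rfl | hy'
          · constructor <;> norm_num
          · rcases Finset.mem_insert.mp hy' with rfl | hy''
            · constructor <;> norm_num
            · exact Ioo_subset_Icc_self (hsub (Finset.mem_coe.mpr hy''))
        have hTz : ∀ y ∈ T, (Polynomial.derivative^[j] u).eval y = 0 := by
          intro y hy
          rcases Finset.mem_insert.mp hy with rfl | hy'
          · exact hevm1
          · rcases Finset.mem_insert.mp hy' with rfl | hy''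
            · exact hev1
            · exact hz y hy''
        obtain ⟨S', hc', hsub', hz', _, _⟩ :=
          aux_rolle_finset (a := (-1 : ℝ)) (b := (1 : ℝ))
            (g := fun y => (Polynomial.derivative^[j] u).eval y)
            (g' := fun y => (Polynomial.derivative^[j + 1] u).eval y)
            ((Polynomial.derivative^[j] u).continuous.continuousOn)
            (fun x _ => by
              rw [Function.iterate_succ_apply']
              exact (Polynomial.derivative^[j] u).hasDerivAt x)
            (j + 1) T hTsub hTz hTcard
        exact ⟨S', hc', hsub', hz'⟩
  obtain ⟨S, hScard, hSsub, hSz⟩ := hzeros k le_rfl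
  -- relate to legendrePoly
  have hcne : (1 / (2 ^ k * (Nat.factorial k : ℝ))) ≠ 0 := by positivity
  have hLeg_ne : legendrePoly k ≠ 0 := by
    rw [legendrePoly]
    exact mul_ne_zero (by simpa using hcne) hDk_ne
  have hLeg_deg : (legendrePoly k).natDegree = k := by
    rw [legendrePoly, Polynomial.natDegree_C_mul hcne, hDk_deg]
  have hLeg_root : ∀ y : ℝ, (Polynomial.derivative^[k] u).eval y = 0 →
      (legendrePoly k).eval y = 0 := by
    intro y hy
    rw [legendrePoly]
    simp [hy]
    exact Or.inr hy
  -- S is contained in the root finset of legendrePoly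
  set R := (legendrePoly k).roots.toFinset with hR
  have hSR : S ⊆ R := by
    intro y hy
    rw [hR, Multiset.mem_toFinset, Polynomial.mem_roots hLeg_ne]
    exact hLeg_root y (hSz y hy)
  have hRcard : R.card ≤ k := by
    calc R.card ≤ Multiset.card (legendrePoly k).roots := Multiset.toFinset_card_le _
      _ ≤ (legendrePoly k).natDegree := Polynomial.card_roots' _
      _ = k := hLeg_deg
  have hSeqR : S = R := Finset.eq_of_subset_of_card_le hSR (by omega)
  have hrR : r ∈ R := by
    rw [hR, Multiset.mem_toFinset, Polynomial.mem_roots hLeg_ne]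
    exact hr
  rw [← hSeqR] at hrR
  exact hSsub (Finset.mem_coe.mpr hrR)

/-- Iterated derivative of a sum of polynomials. -/
lemma aux_iterate_derivative_add (n : ℕ) (p q : ℝ[X]) :
    Polynomial.derivative^[n] (p + q) =
      Polynomial.derivative^[n] p + Polynomial.derivative^[n] q := by
  induction n generalizing p q with
  | zero => simp
  | succ n IH => rw [Function.iterate_succ_apply, Function.iterate_succ_apply,
      Function.iterate_succ_apply, Polynomial.derivative_add, IH]

theorem hermite_interpolant_at_legendre_zeros_le (k : ℕ) (hk : 1 ≤ k)
    (f : ℝ → ℝ)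
    (hfc : ContinuousOn f (Set.Icc (-1 : ℝ) 1))
    (hfd : ContDiffOn ℝ (2 * k - 1 + 1 : ℕ) f (Set.Ioo (-1 : ℝ) 1))
    (hfpos : ∀ x ∈ Set.Ioo (-1 : ℝ) 1,
      0 ≤ iteratedDerivWithin (2 * k - 1 + 1) f (Set.Ioo (-1 : ℝ) 1) x)
    (t : Fin k → ℝ) (ht : Function.Injective t)
    (htroot : ∀ ℓ, (legendrePoly k).eval (t ℓ) = 0)
    (p : ℝ[X]) (hpdeg : p.natDegree ≤ 2 * k - 1)
    (hval : ∀ ℓ, p.eval (t ℓ) = f (t ℓ))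
    (hder : ∀ ℓ, (Polynomial.derivative p).eval (t ℓ) = derivWithin f (Set.Ioo (-1 : ℝ) 1) (t ℓ)) :
    ∀ x ∈ Set.Icc (-1 : ℝ) 1, p.eval x ≤ f x := by
  have hN : 2 * k - 1 + 1 = 2 * k := by omega
  rw [hN] at hfd hfpos
  set s : Set ℝ := Ioo (-1 : ℝ) 1 with hs
  have hso : IsOpen s := isOpen_Ioo
  have hu : UniqueDiffOn ℝ s := hso.uniqueDiffOn
  have htIoo : ∀ ℓ, t ℓ ∈ s := fun ℓ => aux_legendre_roots_mem_Ioo k hk (htroot ℓ)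
  intro x hx
  by_cases hxt : ∃ ℓ, t ℓ = x
  · obtain ⟨ℓ, rfl⟩ := hxt
    exact le_of_eq (hval ℓ)
  push_neg at hxt
  -- the nodal polynomial
  set w : ℝ[X] := ∏ ℓ : Fin k, (X - C (t ℓ)) with hw
  have hwx : w.eval x ≠ 0 := by
    rw [hw, Polynomial.eval_prod]
    apply Finset.prod_ne_zero_iff.mpr
    intro ℓ _
    simp only [Polynomial.eval_sub, Polynomial.eval_X, Polynomial.eval_C]
    exact sub_ne_zero.mpr (Ne.symm (hxt ℓ))
  have hW : (0:ℝ) < (w.eval x)^2 := by positivity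
  set c : ℝ := (f x - p.eval x) / (w.eval x)^2 with hc
  set P : ℝ[X] := p + C c * w ^ 2 with hP
  set g : ℝ → ℝ := f - fun y => P.eval y with hg
  have hwt : ∀ ℓ, w.eval (t ℓ) = 0 := by
    intro ℓ
    rw [hw, Polynomial.eval_prod]
    apply Finset.prod_eq_zero (Finset.mem_univ ℓ)
    simp
  have hPt : ∀ ℓ, P.eval (t ℓ) = p.eval (t ℓ) := by
    intro ℓ
    simp [hP, hwt ℓ]
  have hPx : P.eval x = f x := by
    simp only [hP, Polynomial.eval_add, Polynomial.eval_mul, Polynomial.eval_C,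
      Polynomial.eval_pow]
    rw [hc, div_mul_cancel₀ _ (pow_ne_zero 2 hwx)]
    ring
  have hgx : g x = 0 := by simp [hg, hPx]
  have hgt : ∀ ℓ, g (t ℓ) = 0 := by
    intro ℓ; simp [hg, hPt ℓ, hval ℓ]
  have hgc : ContinuousOn g (Icc (-1:ℝ) 1) := hfc.sub (P.continuous.continuousOn)
  have hfdiff : DifferentiableOn ℝ f s := by
    apply hfd.differentiableOn
    exact_mod_cast (by omega : 2 * k ≠ 0)
  set g' : ℝ → ℝ := fun y => derivWithin f s y - (Polynomial.derivative P).eval y with hg'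
  have hgd : ∀ y ∈ s, HasDerivAt g (g' y) y := by
    intro y hy
    have h1 : DifferentiableAt ℝ f y := (hfdiff y hy).differentiableAt (hso.mem_nhds hy)
    have h2 : HasDerivAt f (derivWithin f s y) y := by
      rw [derivWithin_of_isOpen hso hy]; exact h1.hasDerivAt
    exact h2.sub (P.hasDerivAt y)
  have hg't : ∀ ℓ, g' (t ℓ) = 0 := by
    intro ℓ
    have hzero : (Polynomial.derivative (C c * w ^ 2)).eval (t ℓ) = 0 := by
      rw [Polynomial.derivative_C_mul, Polynomial.derivative_pow]
      simp [hwt ℓ]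
    show derivWithin f s (t ℓ) - (Polynomial.derivative P).eval (t ℓ) = 0
    rw [hP, Polynomial.derivative_add, Polynomial.eval_add, hzero, add_zero, hder ℓ, sub_self]
  set T : Finset ℝ := Finset.image t Finset.univ with hT
  have hTcard : T.card = k := by
    rw [hT, Finset.card_image_of_injective _ ht, Finset.card_univ, Fintype.card_fin]
  have hxT : x ∉ T := by
    rw [hT]
    simp only [Finset.mem_image]
    rintro ⟨ℓ, -, h⟩
    exact hxt ℓ h
  have hTsub : (↑T : Set ℝ) ⊆ s := by
    intro y hy
    obtain ⟨ℓ, -, rfl⟩ := Finset.mem_image.mp (Finset.mem_coe.mp hy)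
    exact htIoo ℓ
  set S : Finset ℝ := insert x T with hSdef
  have hScard : S.card = k + 1 := by
    rw [hSdef, Finset.card_insert_of_notMem hxT, hTcard]
  have hSsub : (↑S : Set ℝ) ⊆ Icc (-1:ℝ) 1 := by
    intro y hy
    rcases Finset.mem_insert.mp (Finset.mem_coe.mp hy) with rfl | hy'
    · exact hx
    · exact Ioo_subset_Icc_self (hTsub (Finset.mem_coe.mpr hy'))
  have hSz : ∀ y ∈ S, g y = 0 := by
    intro y hy
    rcases Finset.mem_insert.mp hy with rfl | hy'
    · exact hgx
    · obtain ⟨ℓ, -, rfl⟩ := Finset.mem_image.mp hy'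
      exact hgt ℓ
  obtain ⟨S₁, hS₁card, hS₁sub, hS₁z, hS₁not, -⟩ :=
    aux_rolle_finset (a := (-1:ℝ)) (b := 1) hgc (fun y hy => hgd y hy) k S hSsub hSz hScard
  have hdisj : Disjoint S₁ T := by
    rw [Finset.disjoint_left]
    intro y hy hyT
    exact hS₁not y hy (Finset.mem_insert_of_mem hyT)
  set Z : Finset ℝ := S₁ ∪ T with hZ
  have hZcard : Z.card = 2 * k := by
    rw [hZ, Finset.card_union_of_disjoint hdisj, hS₁card, hTcard]
    ring
  have hZsub : (↑Z : Set ℝ) ⊆ s := by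
    intro y hy
    rcases Finset.mem_union.mp (Finset.mem_coe.mp hy) with h | h
    · exact hS₁sub (Finset.mem_coe.mpr h)
    · exact hTsub (Finset.mem_coe.mpr h)
  have hZz : ∀ y ∈ Z, derivWithin g s y = 0 := by
    intro y hy
    have hys : y ∈ s := hZsub (Finset.mem_coe.mpr hy)
    rw [derivWithin_of_isOpen hso hys, (hgd y hys).deriv]
    rcases Finset.mem_union.mp hy with h | h
    · exact hS₁z y h
    · obtain ⟨ℓ, -, rfl⟩ := Finset.mem_image.mp h
      exact hg't ℓ
  have hPsm : ContDiffOn ℝ (2*k : ℕ) (fun y => P.eval y) s :=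
    (aux_contDiff_polyeval P (2*k : ℕ)).contDiffOn
  have hgsm : ContDiffOn ℝ (2*k : ℕ) g s := hfd.sub hPsm
  have hg1sm : ContDiffOn ℝ ((2*k - 1 : ℕ)) (derivWithin g s) s := by
    apply hgsm.derivWithin hu
    exact_mod_cast (by omega : 2*k - 1 + 1 ≤ 2*k)
  obtain ⟨ξ, hξs, hξ0⟩ :=
    aux_multi_rolle (2*k - 1) (derivWithin g s) hg1sm Z hZsub hZz (by omega)
  have hg2k : iteratedDerivWithin (2*k) g s ξ = 0 := by
    have h := iteratedDerivWithin_succ' (f := g) (n := 2*k - 1) (s := s)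
    rw [hN] at h
    rw [h]
    exact hξ0
  have hsplit : iteratedDerivWithin (2*k) g s ξ =
      iteratedDerivWithin (2*k) f s ξ - iteratedDerivWithin (2*k) (fun y => P.eval y) s ξ :=
    iteratedDerivWithin_sub hξs hu (hfd ξ hξs) (hPsm ξ hξs)
  -- compute the polynomial part
  have hwmon : w.Monic := by
    rw [hw]
    exact Polynomial.monic_prod_of_monic _ _ (fun ℓ _ => Polynomial.monic_X_sub_C _)
  have hwdeg : w.natDegree = k := by
    rw [hw, Polynomial.natDegree_prod_of_monic _ _ (fun ℓ _ => Polynomial.monic_X_sub_C _)]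
    simp [Polynomial.natDegree_X_sub_C]
  have hw2mon : (w ^ 2).Monic := hwmon.pow 2
  have hw2deg : (w ^ 2).natDegree = 2 * k := by
    rw [hwmon.natDegree_pow, hwdeg]
  have hdlt : (w ^ 2 - X ^ (2*k)).natDegree < 2 * k := by
    by_cases hd0 : w ^ 2 - X ^ (2*k) = 0
    · rw [hd0]
      simp only [Polynomial.natDegree_zero]
      omega
    · have hdeg_eq : (w ^ 2).degree = ((X : ℝ[X]) ^ (2*k)).degree := by
        rw [Polynomial.degree_X_pow, Polynomial.degree_eq_natDegree hw2mon.ne_zero, hw2deg]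
      have hlc : (w ^ 2).leadingCoeff = ((X : ℝ[X]) ^ (2*k)).leadingCoeff := by
        rw [hw2mon.leadingCoeff, Polynomial.leadingCoeff_X_pow]
      have hdd : (w ^ 2 - X ^ (2*k)).degree < (w ^ 2).degree :=
        Polynomial.degree_sub_lt hdeg_eq hw2mon.ne_zero hlc
      have := Polynomial.natDegree_lt_natDegree hd0 hdd
      omega
  have hD2k : Polynomial.derivative^[2*k] P = C (c * (2*k).factorial) := by
    rw [hP, aux_iterate_derivative_add,
      Polynomial.iterate_derivative_eq_zero (by omega : p.natDegree < 2*k), zero_add,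
      Polynomial.iterate_derivative_C_mul]
    have hsplit2 : w ^ 2 = (w ^ 2 - X ^ (2*k)) + X ^ (2*k) := by ring
    rw [hsplit2, aux_iterate_derivative_add, Polynomial.iterate_derivative_eq_zero hdlt,
      zero_add, Polynomial.iterate_derivative_X_pow_eq_C_mul, Nat.descFactorial_self,
      Nat.sub_self, pow_zero, mul_one, ← Polynomial.C_mul]
  have hfval : iteratedDerivWithin (2*k) f s ξ = c * (2*k).factorial := by
    have h1 : iteratedDerivWithin (2*k) (fun y => P.eval y) s ξ = c * (2*k).factorial := by
      rw [aux_iteratedDerivWithin_polyeval hso (2*k) P ξ hξs, hD2k]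
      simp
    rw [hsplit, h1] at hg2k
    linarith
  have hfnonneg := hfpos ξ hξs
  rw [hfval] at hfnonneg
  have hfact : (0:ℝ) < ((2*k).factorial : ℝ) := by
    exact_mod_cast Nat.factorial_pos (2*k)
  have hcnn : 0 ≤ c := by
    by_contra hneg
    push_neg at hneg
    nlinarith
  have hfin : 0 ≤ c * (w.eval x)^2 := mul_nonneg hcnn (sq_nonneg _)
  have hfp : c * (w.eval x)^2 = f x - p.eval x := by
    rw [hc, div_mul_cancel₀ _ (pow_ne_zero 2 hwx)]
  linarith
end
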